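/- arXiv:2503.06454 — 6 statements merged into one kernel-verified Lean document; each statement's English description precedes it below -/
import Mathlib

section
/- Let X ∈ ℝ^{M×N} satisfy the design assumption (A1) with constant λ̲ ∈ (0,1], and define the (un-normalized) model prior p(γ) = Γ(|γ|)⁻¹ (𝟙ᵀ(X_γᵀX_γ)⁻¹𝟙)^{1/2} det(X_γᵀX_γ)^{1/2} θ^{|γ|}(1−θ)^{N−|γ|} for γ ∈ S_L, where θ ∈ (0,1). Then for every nonempty γ ∈ S_L and every j ∉ γ with γ' = γ ∪ {j} ∈ S_L, the ratio satisfies √(M λ̲)/L ≤ (p(γ')/p(γ)) / (θ/(1−θ)) ≤ √(L M / λ̲). -/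
open Matrix MeasureTheory BigOperators

noncomputable section

/-- Submatrix `X_γ` of `X` consisting of the columns indexed by `γ` (in increasing order). -/
def subCols {M N : ℕ} (X : Matrix (Fin M) (Fin N) ℝ) (γ : Finset (Fin N)) :
    Matrix (Fin M) (Fin γ.card) ℝ :=
  Matrix.of fun i j => X i (γ.orderEmbOfFin rfl j)

/-- Gram matrix `X_γᵀ X_γ`. -/
def gram {M N : ℕ} (X : Matrix (Fin M) (Fin N) ℝ) (γ : Finset (Fin N)) :
    Matrix (Fin γ.card) (Fin γ.card) ℝ :=
  (subCols X γ)ᵀ * subCols X γ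

/-- `𝟙ᵀ (X_γᵀX_γ)⁻¹ 𝟙`. -/
def onesQuad {M N : ℕ} (X : Matrix (Fin M) (Fin N) ℝ) (γ : Finset (Fin N)) : ℝ :=
  (fun _ => (1 : ℝ)) ⬝ᵥ ((gram X γ)⁻¹ *ᵥ fun _ => (1 : ℝ))

/-- Design assumption (A1): every column of `X` has squared Euclidean norm `M`, and
`λ_min(X_γᵀX_γ) ≥ M·λ̲` for every model `γ` with `1 ≤ |γ| ≤ L`; the minimum-eigenvalue
condition is stated equivalently through the quadratic form of the (symmetric) Gram matrix. -/
def DesignA1 {M N : ℕ} (X : Matrix (Fin M) (Fin N) ℝ) (L : ℕ) (lam : ℝ) : Prop :=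
  (∀ j, (fun i => X i j) ⬝ᵥ (fun i => X i j) = (M : ℝ)) ∧
  (∀ γ : Finset (Fin N), 1 ≤ γ.card → γ.card ≤ L →
    ∀ v : Fin γ.card → ℝ, (M : ℝ) * lam * (v ⬝ᵥ v) ≤ v ⬝ᵥ ((gram X γ) *ᵥ v))

/-- The (un-normalized) model prior
`p(γ) = Γ(|γ|)⁻¹ (𝟙ᵀ(X_γᵀX_γ)⁻¹𝟙)^{1/2} det(X_γᵀX_γ)^{1/2} θ^{|γ|} (1-θ)^{N-|γ|}`,
where `Γ(ℓ) = (ℓ-1)!`. -/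
def priorWeight {M N : ℕ} (X : Matrix (Fin M) (Fin N) ℝ) (θ : ℝ) (γ : Finset (Fin N)) : ℝ :=
  ((γ.card - 1).factorial : ℝ)⁻¹ * Real.sqrt (onesQuad X γ) *
    Real.sqrt ((gram X γ).det) * θ ^ γ.card * (1 - θ) ^ (N - γ.card)

lemma gram_apply {M N : ℕ} (X : Matrix (Fin M) (Fin N) ℝ) (γ : Finset (Fin N))
    (a b : Fin γ.card) :
    gram X γ a b = ∑ i, X i (γ.orderEmbOfFin rfl a) * X i (γ.orderEmbOfFin rfl b) := by
  simp [_root_.gram, subCols, Matrix.mul_apply]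

lemma gram_symm {M N : ℕ} (X : Matrix (Fin M) (Fin N) ℝ) (γ : Finset (Fin N)) :
    (gram X γ)ᵀ = gram X γ := by
  rw [_root_.gram, transpose_mul, transpose_transpose]

lemma gram_herm {M N : ℕ} (X : Matrix (Fin M) (Fin N) ℝ) (γ : Finset (Fin N)) :
    (gram X γ).IsHermitian := by
  rw [Matrix.IsHermitian, conjTranspose_eq_transpose_of_trivial, gram_symm]

lemma gram_posDef {M N : ℕ} {X : Matrix (Fin M) (Fin N) ℝ} {lam : ℝ}
    (hMl : 0 < (M:ℝ) * lam) (γ' : Finset (Fin N))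
    (hquad : ∀ v : Fin γ'.card → ℝ,
      (M : ℝ) * lam * (v ⬝ᵥ v) ≤ v ⬝ᵥ ((gram X γ') *ᵥ v)) :
    (gram X γ').PosDef := by
  refine Matrix.PosDef.of_dotProduct_mulVec_pos (gram_herm X γ') fun x hx => ?_
  have hxx : 0 < x ⬝ᵥ x := by
    have h0 : 0 ≤ x ⬝ᵥ x := Finset.sum_nonneg fun _ _ => mul_self_nonneg _
    have hne : x ⬝ᵥ x ≠ 0 := fun h => hx ((dotProduct_self_eq_zero).mp h)
    exact lt_of_le_of_ne h0 (Ne.symm hne)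
  have := hquad x
  have hst : star x = x := by simp
  rw [hst]
  exact lt_of_lt_of_le (by positivity) this
lemma dot_symm {n : ℕ} {G : Matrix (Fin n) (Fin n) ℝ} (hG : Gᵀ = G) (v w : Fin n → ℝ) :
    v ⬝ᵥ (G *ᵥ w) = w ⬝ᵥ (G *ᵥ v) := by
  rw [dotProduct_mulVec, ← mulVec_transpose, hG, dotProduct_comm]

lemma dot_self_nonneg {n : ℕ} (v : Fin n → ℝ) : 0 ≤ v ⬝ᵥ v :=
  Finset.sum_nonneg fun _ _ => mul_self_nonneg _

lemma key_var {n : ℕ} {G : Matrix (Fin n) (Fin n) ℝ} (hsym : Gᵀ = G)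
    (hpsd : ∀ v : Fin n → ℝ, 0 ≤ v ⬝ᵥ (G *ᵥ v)) {w u : Fin n → ℝ} (hw : G *ᵥ w = u)
    (v : Fin n → ℝ) : 2 * (v ⬝ᵥ u) - v ⬝ᵥ (G *ᵥ v) ≤ w ⬝ᵥ u := by
  have h0 := hpsd (w - v)
  have h1 : (w - v) ⬝ᵥ (G *ᵥ (w - v)) =
      w ⬝ᵥ (G *ᵥ w) - w ⬝ᵥ (G *ᵥ v) - v ⬝ᵥ (G *ᵥ w) + v ⬝ᵥ (G *ᵥ v) := by
    rw [mulVec_sub, dotProduct_sub, sub_dotProduct, sub_dotProduct]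
    ring
  have h2 : w ⬝ᵥ (G *ᵥ v) = v ⬝ᵥ (G *ᵥ w) := dot_symm hsym _ _
  rw [h1, h2, hw] at h0
  linarith

lemma cs_dot {n : ℕ} (w u : Fin n → ℝ) : (w ⬝ᵥ u) ^ 2 ≤ (w ⬝ᵥ w) * (u ⬝ᵥ u) := by
  have h := Finset.sum_mul_sq_le_sq_mul_sq Finset.univ w u
  simpa [dotProduct, sq] using h

lemma inv_quad_le {n : ℕ} {G : Matrix (Fin n) (Fin n) ℝ} {c : ℝ} (hc : 0 < c)
    (hquad : ∀ v : Fin n → ℝ, c * (v ⬝ᵥ v) ≤ v ⬝ᵥ (G *ᵥ v))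
    (hd : IsUnit G.det) (u : Fin n → ℝ) :
    u ⬝ᵥ (G⁻¹ *ᵥ u) ≤ (u ⬝ᵥ u) / c := by
  set w := G⁻¹ *ᵥ u with hwdef
  have hGw : G *ᵥ w = u := by
    rw [hwdef, mulVec_mulVec, mul_nonsing_inv _ hd, one_mulVec]
  have hr : u ⬝ᵥ w = w ⬝ᵥ u := dotProduct_comm _ _
  have h1 : c * (w ⬝ᵥ w) ≤ w ⬝ᵥ u := by
    have := hquad w; rwa [hGw] at this
  have hCS : (w ⬝ᵥ u) ^ 2 ≤ (w ⬝ᵥ w) * (u ⬝ᵥ u) := cs_dot w u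
  have huu : 0 ≤ u ⬝ᵥ u := dot_self_nonneg u
  rw [hr]
  rcases le_or_gt (w ⬝ᵥ u) 0 with h | h
  · exact le_trans h (by positivity)
  · have h4 : c * (w ⬝ᵥ u) ^ 2 ≤ (w ⬝ᵥ u) * (u ⬝ᵥ u) := by nlinarith
    have h5 : c * (w ⬝ᵥ u) ≤ u ⬝ᵥ u := by nlinarith
    rw [le_div_iff₀ hc]
    linarith [mul_comm c (w ⬝ᵥ u)]
lemma dot_comp_equiv {m n : Type*} [Fintype m] [Fintype n] (σ : m ≃ n) (w : m → ℝ) (y : n → ℝ) :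
    (w ∘ σ.symm) ⬝ᵥ y = w ⬝ᵥ (y ∘ σ) := by
  unfold dotProduct
  rw [← Equiv.sum_comp σ (fun c => (w ∘ σ.symm) c * y c)]
  simp

lemma quad_reindex {m n : Type*} [Fintype m] [Fintype n] (A : Matrix n n ℝ) (σ : m ≃ n)
    (w : m → ℝ) :
    (w ∘ σ.symm) ⬝ᵥ (A *ᵥ (w ∘ σ.symm)) = w ⬝ᵥ ((A.submatrix σ σ) *ᵥ w) := by
  rw [submatrix_mulVec_equiv, ← dot_comp_equiv σ w]

lemma insert_facts {M N L : ℕ} (X : Matrix (Fin M) (Fin N) ℝ) (lam : ℝ)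
    (hMl : 0 < (M:ℝ) * lam) (hA1 : DesignA1 X L lam)
    (γ : Finset (Fin N)) (j : Fin N) (hj : j ∉ γ)
    (hγ1 : 1 ≤ γ.card) (hγ'L : (insert j γ).card ≤ L) :
    ((M:ℝ) * lam) * (gram X γ).det ≤ (gram X (insert j γ)).det ∧
      (gram X (insert j γ)).det ≤ (M:ℝ) * (gram X γ).det ∧
      onesQuad X γ ≤ onesQuad X (insert j γ) := by
  set γ' := insert j γ with hγ'def
  have hjmem : j ∈ γ' := Finset.mem_insert_self _ _
  have hcard' : γ'.card = γ.card + 1 := Finset.card_insert_of_notMem hj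
  have hγL : γ.card ≤ L := by omega
  have hγ'1 : 1 ≤ γ'.card := by omega
  have hquad := hA1.2 γ hγ1 hγL
  have hquad' := hA1.2 γ' hγ'1 hγ'L
  have hpsd' : ∀ v, 0 ≤ v ⬝ᵥ (gram X γ' *ᵥ v) := fun v =>
    le_trans (mul_nonneg hMl.le (dot_self_nonneg v)) (hquad' v)
  have hpd : (gram X γ).PosDef := gram_posDef hMl γ hquad
  have hpd' : (gram X γ').PosDef := gram_posDef hMl γ' hquad'
  have hdu : IsUnit (gram X γ).det := hpd.det_pos.ne'.isUnit
  have hdu' : IsUnit (gram X γ').det := hpd'.det_pos.ne'.isUnit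
  haveI : Invertible (gram X γ) := (gram X γ).invertibleOfIsUnitDet hdu
  -- the index embedding
  have hmemγ' : ∀ a : Fin γ.card, γ.orderEmbOfFin rfl a ∈ γ' :=
    fun a => Finset.mem_insert_of_mem (Finset.orderEmbOfFin_mem γ rfl a)
  set ι : Fin γ.card → Fin γ'.card :=
    fun a => (γ'.orderIsoOfFin rfl).symm ⟨γ.orderEmbOfFin rfl a, hmemγ' a⟩ with hιdef
  set e : Fin γ'.card := (γ'.orderIsoOfFin rfl).symm ⟨j, hjmem⟩ with hedef
  have hι : ∀ a, γ'.orderEmbOfFin rfl (ι a) = γ.orderEmbOfFin rfl a := fun a => by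
    rw [← Finset.coe_orderIsoOfFin_apply, hιdef, OrderIso.apply_symm_apply]
  have he : γ'.orderEmbOfFin rfl e = j := by
    rw [← Finset.coe_orderIsoOfFin_apply, hedef, OrderIso.apply_symm_apply]
  set f : Fin γ.card ⊕ Fin 1 → Fin γ'.card := Sum.elim ι (fun _ => e) with hfdef
  have hne : ∀ a, ι a ≠ e := fun a hae => by
    apply hj
    have h := congrArg (γ'.orderEmbOfFin rfl) hae
    rw [hι, he] at h
    rw [← h]
    exact Finset.orderEmbOfFin_mem γ rfl a
  have hinj : Function.Injective f := by
    intro p q hpq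
    cases p with
    | inl a => cases q with
      | inl c =>
        have h : γ.orderEmbOfFin rfl a = γ.orderEmbOfFin rfl c := by
          rw [← hι a, ← hι c]; exact congrArg _ hpq
        exact congrArg Sum.inl ((γ.orderEmbOfFin rfl).injective h)
      | inr c => exact absurd hpq (hne a)
    | inr a => cases q with
      | inl c => exact absurd hpq.symm (hne c)
      | inr c => rw [Subsingleton.elim a c]
  have hbij : Function.Bijective f :=
    (Fintype.bijective_iff_injective_and_card f).2 ⟨hinj, by simp [hcard']⟩
  set σ : (Fin γ.card ⊕ Fin 1) ≃ Fin γ'.card := Equiv.ofBijective f hbij with hσdef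
  have hσl : ∀ a, σ (Sum.inl a) = ι a := fun a => rfl
  have hσr : ∀ c, σ (Sum.inr c) = e := fun c => rfl
  -- block structure
  set b : Fin γ.card → ℝ := fun a => ∑ i, X i (γ.orderEmbOfFin rfl a) * X i j with hbdef
  set Bm : Matrix (Fin γ.card) (Fin 1) ℝ := Matrix.of fun a _ => b a with hBmdef
  set Cm : Matrix (Fin 1) (Fin γ.card) ℝ := Matrix.of fun _ a => b a with hCmdef
  set Dm : Matrix (Fin 1) (Fin 1) ℝ := Matrix.of fun _ _ => (M : ℝ) with hDmdef
  have hXj : (∑ i, X i j * X i j) = (M : ℝ) := by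
    have h := hA1.1 j; simpa [dotProduct] using h
  have hblock : (gram X γ').submatrix σ σ = fromBlocks (gram X γ) Bm Cm Dm := by
    ext p q
    cases p with
    | inl a => cases q with
      | inl c =>
        rw [submatrix_apply, hσl, hσl, fromBlocks_apply₁₁, _root_.gram_apply, _root_.gram_apply, hι, hι]
      | inr c =>
        rw [submatrix_apply, hσl, hσr, fromBlocks_apply₁₂, _root_.gram_apply, hι, he]
        rfl
    | inr a => cases q with
      | inl c =>
        rw [submatrix_apply, hσr, hσl, fromBlocks_apply₂₁, _root_.gram_apply, hι, he]
        simpa [Cm, b] using Finset.sum_congr rfl fun i _ => mul_comm _ _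
      | inr c =>
        rw [submatrix_apply, hσr, hσr, fromBlocks_apply₂₂, _root_.gram_apply, he]
        simpa [hDmdef] using hXj
  set t : ℝ := b ⬝ᵥ ((gram X γ)⁻¹ *ᵥ b) with htdef
  have hdet : (gram X γ').det = (gram X γ).det * ((M:ℝ) - t) := by
    rw [← det_submatrix_equiv_self σ, hblock, det_fromBlocks₁₁, invOf_eq_nonsing_inv,
      det_fin_one]
    congr 1
    show Dm 0 0 - (Cm * (gram X γ)⁻¹ * Bm) 0 0 = (M:ℝ) - t
    have : (Cm * (gram X γ)⁻¹ * Bm) 0 0 = t := by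
      rw [htdef]
      simp only [Matrix.mul_apply, hCmdef, hBmdef, Matrix.of_apply, dotProduct, mulVec,
        Finset.sum_mul, Finset.mul_sum]
      rw [Finset.sum_comm]
      exact Finset.sum_congr rfl fun c _ => Finset.sum_congr rfl fun a _ => by ring
    rw [this]; rfl
  have ht0 : 0 ≤ t := by
    have h := hpd.inv.posSemidef.dotProduct_mulVec_nonneg b
    simpa [htdef] using h
  -- lower bound on the Schur complement
  set u : Fin γ.card → ℝ := -((gram X γ)⁻¹ *ᵥ b) with hudef
  have hGu : gram X γ *ᵥ u = -b := by
    rw [hudef, mulVec_neg, mulVec_mulVec, mul_nonsing_inv _ hdu, one_mulVec]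
  set w1 : Fin γ.card ⊕ Fin 1 → ℝ := Sum.elim u (fun _ => 1) with hw1def
  have hmv : fromBlocks (gram X γ) Bm Cm Dm *ᵥ w1 =
      Sum.elim (0 : Fin γ.card → ℝ) (fun _ => (M:ℝ) - t) := by
    rw [hw1def, fromBlocks_mulVec]
    simp only [Sum.elim_comp_inl, Sum.elim_comp_inr]
    funext p
    cases p with
    | inl a =>
      rw [Sum.elim_inl, Sum.elim_inl]
      have hB : (Bm *ᵥ fun _ => (1:ℝ)) a = b a := by simp [hBmdef, mulVec, dotProduct]
      have hGua : (gram X γ *ᵥ u) a = -(b a) := by rw [hGu]; rfl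
      simp [Pi.add_apply, hGua, hB]
    | inr c =>
      rw [Sum.elim_inr, Sum.elim_inr]
      have h1 : (Cm *ᵥ u) c = -t := by
        simp [hCmdef, mulVec, dotProduct, hudef, htdef, mul_neg]
      have h2 : (Dm *ᵥ fun _ => (1:ℝ)) c = (M:ℝ) := by
        simp [hDmdef, mulVec, dotProduct]
      simp only [Pi.add_apply, h1, h2]
      ring
  have hv1quad : (w1 ∘ σ.symm) ⬝ᵥ (gram X γ' *ᵥ (w1 ∘ σ.symm)) = (M:ℝ) - t := by
    rw [quad_reindex, hblock, hmv, hw1def, sumElim_dotProduct_sumElim]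
    simp [dotProduct]
  have hv1v1 : (w1 ∘ σ.symm) ⬝ᵥ (w1 ∘ σ.symm) = u ⬝ᵥ u + 1 := by
    rw [dot_comp_equiv]
    have hcomp : (w1 ∘ σ.symm) ∘ σ = w1 := by funext p; simp
    rw [hcomp, hw1def, sumElim_dotProduct_sumElim]
    simp [dotProduct]
  have hslow : (M:ℝ) * lam ≤ (M:ℝ) - t := by
    have h := hquad' (w1 ∘ σ.symm)
    rw [hv1quad, hv1v1] at h
    nlinarith [dot_self_nonneg u]
  -- onesQuad comparison
  set w0 : Fin γ.card → ℝ := (gram X γ)⁻¹ *ᵥ (fun _ => (1:ℝ)) with hw0def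
  have hGw0 : gram X γ *ᵥ w0 = fun _ => 1 := by
    rw [hw0def, mulVec_mulVec, mul_nonsing_inv _ hdu, one_mulVec]
  set w0' : Fin γ'.card → ℝ := (gram X γ')⁻¹ *ᵥ (fun _ => (1:ℝ)) with hw0'def
  have hGw0' : gram X γ' *ᵥ w0' = fun _ => 1 := by
    rw [hw0'def, mulVec_mulVec, mul_nonsing_inv _ hdu', one_mulVec]
  set w2 : Fin γ.card ⊕ Fin 1 → ℝ := Sum.elim w0 (fun _ => 0) with hw2def
  have hkv := key_var (gram_symm X γ') hpsd' hGw0' (w2 ∘ σ.symm)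
  have h1 : (w2 ∘ σ.symm) ⬝ᵥ (fun _ => (1:ℝ)) = w0 ⬝ᵥ (fun _ => (1:ℝ)) := by
    rw [dot_comp_equiv]
    have : ((fun _ => (1:ℝ)) ∘ σ) = Sum.elim (fun _ => (1:ℝ)) (fun _ => (1:ℝ)) := by
      funext p; cases p <;> rfl
    rw [this, hw2def, sumElim_dotProduct_sumElim]
    simp [dotProduct]
  have h2 : (w2 ∘ σ.symm) ⬝ᵥ (gram X γ' *ᵥ (w2 ∘ σ.symm)) = w0 ⬝ᵥ (fun _ => (1:ℝ)) := by
    rw [quad_reindex, hblock, hw2def, fromBlocks_mulVec]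
    simp only [Sum.elim_comp_inl, Sum.elim_comp_inr]
    rw [sumElim_dotProduct_sumElim]
    have hB0 : Bm *ᵥ (fun _ => (0:ℝ)) = 0 := by
      funext a; simp [hBmdef, mulVec, dotProduct]
    have hD0 : Dm *ᵥ (fun _ => (0:ℝ)) = 0 := by
      funext a; simp [hDmdef, mulVec, dotProduct]
    rw [hB0, hD0, add_zero, add_zero, hGw0]
    simp
  have hqq' : onesQuad X γ ≤ onesQuad X γ' := by
    have hq : onesQuad X γ = w0 ⬝ᵥ (fun _ => (1:ℝ)) := dotProduct_comm _ _
    have hq' : onesQuad X γ' = w0' ⬝ᵥ (fun _ => (1:ℝ)) := dotProduct_comm _ _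
    rw [hq, hq']
    have := hkv
    rw [h1, h2] at this
    linarith
  refine ⟨?_, ?_, hqq'⟩
  · rw [hdet, mul_comm ((gram X γ).det)]
    exact mul_le_mul_of_nonneg_right hslow hpd.det_pos.le
  · rw [hdet]
    have : (M:ℝ) - t ≤ (M:ℝ) := by linarith
    calc (gram X γ).det * ((M:ℝ) - t) ≤ (gram X γ).det * (M:ℝ) :=
          mul_le_mul_of_nonneg_left this hpd.det_pos.le
      _ = (M:ℝ) * (gram X γ).det := mul_comm _ _

lemma onesQuad_le {M N L : ℕ} {X : Matrix (Fin M) (Fin N) ℝ} {lam : ℝ}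
    (hMl : 0 < (M:ℝ) * lam) (hA1 : DesignA1 X L lam)
    (γ : Finset (Fin N)) (h1 : 1 ≤ γ.card) (h2 : γ.card ≤ L) :
    onesQuad X γ ≤ (γ.card : ℝ) / ((M:ℝ) * lam) := by
  have hquad := hA1.2 γ h1 h2
  have hpd := gram_posDef hMl γ hquad
  have h := inv_quad_le hMl hquad hpd.det_pos.ne'.isUnit (fun _ : Fin γ.card => (1:ℝ))
  have hone : ((fun _ : Fin γ.card => (1:ℝ)) ⬝ᵥ (fun _ : Fin γ.card => (1:ℝ)) : ℝ)
      = (γ.card : ℝ) := by simp [dotProduct]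
  rw [hone] at h
  exact h

lemma onesQuad_ge {M N L : ℕ} {X : Matrix (Fin M) (Fin N) ℝ} {lam : ℝ}
    (hMl : 0 < (M:ℝ) * lam) (hM : 0 < M) (hA1 : DesignA1 X L lam)
    (γ : Finset (Fin N)) (h1 : 1 ≤ γ.card) (h2 : γ.card ≤ L) :
    1 / (M:ℝ) ≤ onesQuad X γ := by
  have hMpos : (0:ℝ) < M := by exact_mod_cast hM
  have hquad := hA1.2 γ h1 h2
  have hpsd : ∀ v, 0 ≤ v ⬝ᵥ (gram X γ *ᵥ v) := fun v =>
    le_trans (mul_nonneg hMl.le (dot_self_nonneg v)) (hquad v)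
  have hpd := gram_posDef hMl γ hquad
  have hdu : IsUnit (gram X γ).det := hpd.det_pos.ne'.isUnit
  set ones : Fin γ.card → ℝ := fun _ => 1 with honesdef
  set Bq : ℝ := ones ⬝ᵥ (gram X γ *ᵥ ones) with hBdef
  set k : ℝ := (γ.card : ℝ) with hkdef
  have hk1 : (1:ℝ) ≤ k := by rw [hkdef]; exact_mod_cast h1
  have honesones : ones ⬝ᵥ ones = k := by simp [honesdef, dotProduct, hkdef]
  have hBpos : 0 < Bq := by
    have hh := hquad ones
    rw [honesones] at hh
    rw [hBdef]
    nlinarith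
  have hentry : ∀ a c : Fin γ.card, gram X γ a c ≤ (M:ℝ) := by
    intro a c
    have ha := hA1.1 (γ.orderEmbOfFin rfl a)
    have hc := hA1.1 (γ.orderEmbOfFin rfl c)
    simp only [dotProduct] at ha hc
    have hsq := Finset.sum_nonneg (fun i (_ : i ∈ Finset.univ) =>
      sq_nonneg (X i (γ.orderEmbOfFin rfl a) - X i (γ.orderEmbOfFin rfl c)))
    have hexp : ∀ i ∈ Finset.univ,
        (X i (γ.orderEmbOfFin rfl a) - X i (γ.orderEmbOfFin rfl c))^2 =
        X i (γ.orderEmbOfFin rfl a) * X i (γ.orderEmbOfFin rfl a)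
          - 2 * (X i (γ.orderEmbOfFin rfl a) * X i (γ.orderEmbOfFin rfl c))
          + X i (γ.orderEmbOfFin rfl c) * X i (γ.orderEmbOfFin rfl c) :=
      fun i _ => by ring
    rw [Finset.sum_congr rfl hexp, Finset.sum_add_distrib, Finset.sum_sub_distrib,
      ← Finset.mul_sum, ha, hc] at hsq
    rw [_root_.gram_apply]
    linarith
  have hBle : Bq ≤ k * k * (M:ℝ) := by
    have hBeq : Bq = ∑ a, ∑ c, gram X γ a c := by
      simp [hBdef, honesdef, dotProduct, mulVec]
    rw [hBeq]
    calc ∑ a, ∑ c, gram X γ a c ≤ ∑ (_ : Fin γ.card), ∑ (_ : Fin γ.card), (M:ℝ) :=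
          Finset.sum_le_sum fun a _ => Finset.sum_le_sum fun c _ => hentry a c
      _ = k * k * (M:ℝ) := by
          simp [Finset.sum_const, Finset.card_univ, hkdef]
          try ring
  set w0 : Fin γ.card → ℝ := (gram X γ)⁻¹ *ᵥ ones with hw0def
  have hGw0 : gram X γ *ᵥ w0 = ones := by
    rw [hw0def, mulVec_mulVec, mul_nonsing_inv _ hdu, one_mulVec]
  have hkv := key_var (gram_symm X γ) hpsd hGw0 (fun _ => k / Bq)
  have hdot1 : ((fun _ => k / Bq) ⬝ᵥ ones) = k * (k / Bq) := by
    simp [honesdef, dotProduct, hkdef]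
    try ring
  have hsmul : (fun _ => k / Bq) = (k / Bq) • ones := by
    funext i; simp [honesdef]
  have hdot2 : ((fun _ => k / Bq) ⬝ᵥ (gram X γ *ᵥ (fun _ => k / Bq))) =
      (k / Bq) * ((k / Bq) * Bq) := by
    rw [hsmul, mulVec_smul, dotProduct_smul, smul_dotProduct, hBdef]
    simp [smul_eq_mul]
    try ring
  rw [hdot1, hdot2] at hkv
  have hval : 2 * (k * (k / Bq)) - (k / Bq) * ((k / Bq) * Bq) = k * k / Bq := by
    field_simp; ring
  rw [hval] at hkv
  have hfinal : 1 / (M:ℝ) ≤ k * k / Bq := by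
    rw [div_le_div_iff₀ hMpos hBpos]
    nlinarith
  have hqform : onesQuad X γ = w0 ⬝ᵥ ones := dotProduct_comm _ _
  rw [hqform]
  linarith

set_option maxHeartbeats 1000000 in
/-- Lemma S1: under (A1), for every nonempty `γ ∈ S_L` and `j ∉ γ` with
`γ' = γ ∪ {j} ∈ S_L`, `√(Mλ̲)/L ≤ (p(γ')/p(γ))/(θ/(1-θ)) ≤ √(LM/λ̲)`. -/
theorem statement_0 {M N L : ℕ} (X : Matrix (Fin M) (Fin N) ℝ) (lam θ : ℝ)
    (hlam0 : 0 < lam) (hlam1 : lam ≤ 1) (hθ0 : 0 < θ) (hθ1 : θ < 1)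
    (hA1 : DesignA1 X L lam)
    (γ : Finset (Fin N)) (j : Fin N) (hj : j ∉ γ)
    (hγ1 : 1 ≤ γ.card) (hγ'L : (insert j γ).card ≤ L) :
    Real.sqrt ((M : ℝ) * lam) / L ≤
        (priorWeight X θ (insert j γ) / priorWeight X θ γ) / (θ / (1 - θ)) ∧
      (priorWeight X θ (insert j γ) / priorWeight X θ γ) / (θ / (1 - θ)) ≤
        Real.sqrt ((L : ℝ) * M / lam) := by
  have hcard' : (insert j γ).card = γ.card + 1 := Finset.card_insert_of_notMem hj
  rcases Nat.eq_zero_or_pos M with hM0 | hM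
  · subst hM0
    have hne : Nonempty (Fin (insert j γ).card) := ⟨⟨0, by omega⟩⟩
    have hz : gram X (insert j γ) = 0 := by
      ext a c; rw [_root_.gram_apply]; simp
    have hg' : (gram X (insert j γ)).det = 0 := by rw [hz]; haveI := hne; exact Matrix.det_zero
    have hpw0 : priorWeight X θ (insert j γ) = 0 := by
      rw [priorWeight, hg', Real.sqrt_zero, mul_zero, zero_mul, zero_mul]
    rw [hpw0, zero_div, zero_div]
    constructor
    · simp
    · exact Real.sqrt_nonneg _
  · have hMpos : (0:ℝ) < M := by exact_mod_cast hM
    have hMl : 0 < (M:ℝ) * lam := mul_pos hMpos hlam0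
    have hγL : γ.card ≤ L := by omega
    have hγ'1 : 1 ≤ (insert j γ).card := by omega
    obtain ⟨hdlow, hdhigh, hqq'⟩ := insert_facts X lam hMl hA1 γ j hj hγ1 hγ'L
    have hq'le := onesQuad_le hMl hA1 (insert j γ) hγ'1 hγ'L
    have hqge := onesQuad_ge hMl hM hA1 γ hγ1 hγL
    have hpd := gram_posDef hMl γ (hA1.2 γ hγ1 hγL)
    have hpd' := gram_posDef hMl (insert j γ) (hA1.2 (insert j γ) hγ'1 hγ'L)
    set q : ℝ := onesQuad X γ with hqdef
    set q' : ℝ := onesQuad X (insert j γ) with hq'def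
    set d : ℝ := (gram X γ).det with hddef
    set d' : ℝ := (gram X (insert j γ)).det with hd'def
    have hd : 0 < d := hpd.det_pos
    have hd' : 0 < d' := hpd'.det_pos
    have hq : 0 < q := lt_of_lt_of_le (by positivity) hqge
    have hq' : 0 < q' := lt_of_lt_of_le hq hqq'
    have hN : (insert j γ).card ≤ N := by
      have h := Finset.card_le_univ (insert j γ)
      simpa using h
    set k := γ.card with hkdef
    have hkR : (1:ℝ) ≤ (k:ℝ) := by exact_mod_cast hγ1
    have hkpos : (0:ℝ) < (k:ℝ) := by linarith
    have h1θ : 0 < 1 - θ := by linarith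
    have hfacN : k * (k-1).factorial = k.factorial := Nat.mul_factorial_pred (by omega)
    have hfac : (k.factorial : ℝ) = (k:ℝ) * (((k-1).factorial : ℕ) : ℝ) := by
      rw [← hfacN]; push_cast; ring
    clear_value q q' d d'
    clear_value k
    have hsq : 0 < Real.sqrt q := Real.sqrt_pos.2 hq
    have hsq' : 0 < Real.sqrt q' := Real.sqrt_pos.2 hq'
    have hsd : 0 < Real.sqrt d := Real.sqrt_pos.2 hd
    have hsd' : 0 < Real.sqrt d' := Real.sqrt_pos.2 hd'
    set S : ℝ := (Real.sqrt q' * Real.sqrt d') / ((k:ℝ) * (Real.sqrt q * Real.sqrt d))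
      with hSdef
    have hfacpos : (0:ℝ) < ((k-1).factorial : ℕ) := by exact_mod_cast (k-1).factorial_pos
    have hRS : priorWeight X θ (insert j γ) / priorWeight X θ γ / (θ / (1 - θ)) = S := by
      have hNk : N - k = (N - (k+1)) + 1 := by omega
      rw [priorWeight, priorWeight, ← hq'def, ← hqdef, ← hd'def, ← hddef, hcard', ← hkdef]
      simp only [Nat.add_sub_cancel]
      rw [hNk, pow_succ θ k, pow_succ (1-θ) (N-(k+1)), hfac, hSdef]
      have hpowθ : (0:ℝ) < θ ^ k := pow_pos hθ0 k
      have hpow1θ : (0:ℝ) < (1-θ) ^ (N - (k+1)) := pow_pos h1θ _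
      field_simp
    rw [hRS]
    have hLpos : (0:ℝ) < L := by
      have : 0 < L := by omega
      exact_mod_cast this
    have hkL : (k:ℝ) ≤ (L:ℝ) := by exact_mod_cast hγL
    have hkL1 : (k:ℝ) + 1 ≤ (L:ℝ) := by
      have : k + 1 ≤ L := by omega
      exact_mod_cast this
    have e1 : (M:ℝ) * lam * q' ≤ (k:ℝ) + 1 := by
      have h := hq'le
      rw [hcard'] at h
      push_cast at h
      rw [le_div_iff₀ hMl] at h
      linarith [h, mul_comm q' ((M:ℝ) * lam)]
    have e2 : (1:ℝ) ≤ (M:ℝ) * q := by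
      have h := hqge
      rw [div_le_iff₀ hMpos] at h
      linarith
    constructor
    · rw [div_le_div_iff₀ hLpos (by positivity)]
      have h1 : Real.sqrt ((M:ℝ)*lam) * (Real.sqrt q * Real.sqrt d) ≤
          Real.sqrt q' * Real.sqrt d' := by
        rw [← Real.sqrt_mul hq'.le, ← Real.sqrt_mul hq.le, ← Real.sqrt_mul hMl.le]
        apply Real.sqrt_le_sqrt
        nlinarith
      calc Real.sqrt ((M:ℝ)*lam) * ((k:ℝ) * (Real.sqrt q * Real.sqrt d))
          = (k:ℝ) * (Real.sqrt ((M:ℝ)*lam) * (Real.sqrt q * Real.sqrt d)) := by ring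
        _ ≤ (L:ℝ) * (Real.sqrt q' * Real.sqrt d') := by
            apply mul_le_mul hkL h1 (by positivity) (by positivity)
        _ = Real.sqrt q' * Real.sqrt d' * (L:ℝ) := by ring
    · have hS0 : 0 ≤ S := by positivity
      have hS2 : S^2 = (q' * d') / ((k:ℝ)^2 * (q * d)) := by
        rw [hSdef, div_pow, mul_pow, mul_pow, mul_pow, Real.sq_sqrt hq'.le,
          Real.sq_sqrt hd'.le, Real.sq_sqrt hq.le, Real.sq_sqrt hd.le]
      have hkey : S^2 ≤ (L:ℝ) * M / lam := by
        rw [hS2, div_le_div_iff₀ (mul_pos (pow_pos hkpos 2) (mul_pos hq hd)) hlam0]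
        have c1 : q' * d' * lam ≤ ((k:ℝ)+1) * d := by
          have h1 : q' * lam * d' ≤ q' * lam * ((M:ℝ)*d) :=
            mul_le_mul_of_nonneg_left hdhigh (by positivity)
          have h2 : (M:ℝ) * lam * q' * d ≤ ((k:ℝ)+1) * d :=
            mul_le_mul_of_nonneg_right e1 hd.le
          nlinarith
        have hk2 : (1:ℝ) ≤ (k:ℝ)^2 := by nlinarith
        have c2 : ((k:ℝ)+1) * d ≤ (L:ℝ) * M * ((k:ℝ)^2 * (q * d)) := by
          have h4 : (1:ℝ) ≤ ((M:ℝ)*q) * ((k:ℝ)^2) := by nlinarith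
          have h3 : (L:ℝ) ≤ (L:ℝ) * (((M:ℝ)*q) * ((k:ℝ)^2)) := by nlinarith
          nlinarith [mul_le_mul_of_nonneg_right h3 hd.le,
            mul_le_mul_of_nonneg_right hkL1 hd.le]
        linarith
      have h := Real.sqrt_le_sqrt hkey
      rwa [Real.sqrt_sq hS0] at h
end
end

section
/- Let X ∈ ℝ^{M×N} satisfy the design assumption (A1) with constant λ̲ ∈ (0,1]. Then for any γ, γ' ∈ S_L with ∅ ≠ γ ⊆ γ', the quadratic forms satisfy |γ'|/(M λ̲) ≥ 𝟙ᵀ(X_{γ'}ᵀX_{γ'})⁻¹𝟙 ≥ 𝟙ᵀ(X_γᵀX_γ)⁻¹𝟙 ≥ 1/M. -/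
open Matrix MeasureTheory BigOperators

noncomputable section

lemma dot_gram {M N : ℕ} (X : Matrix (Fin M) (Fin N) ℝ) (σ : Finset (Fin N))
    (v w : Fin σ.card → ℝ) :
    v ⬝ᵥ (gram X σ *ᵥ w) = (subCols X σ *ᵥ v) ⬝ᵥ (subCols X σ *ᵥ w) := by
  rw [_root_.gram, ← Matrix.mulVec_mulVec, Matrix.dotProduct_mulVec, Matrix.vecMul_transpose]

lemma gram_posDef_s1 {M N L : ℕ} {X : Matrix (Fin M) (Fin N) ℝ} {lam : ℝ}
    (hMl : 0 < (M : ℝ) * lam) (hA1 : DesignA1 X L lam)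
    (σ : Finset (Fin N)) (h1 : 1 ≤ σ.card) (hL : σ.card ≤ L) :
    (gram X σ).PosDef := by
  refine Matrix.PosDef.of_dotProduct_mulVec_pos ?_ (fun x hx => ?_)
  · have := Matrix.isHermitian_conjTranspose_mul_self (subCols X σ)
    simpa [_root_.gram, Matrix.conjTranspose_eq_transpose_of_trivial] using this
  · have hle := hA1.2 σ h1 hL x
    have hxx : 0 < x ⬝ᵥ x := by
      rcases lt_or_eq_of_le (dot_self_nonneg x) with h | h
      · exact h
      · exact absurd ((dotProduct_self_eq_zero).1 h.symm) hx
    have : 0 < x ⬝ᵥ (gram X σ *ᵥ x) := lt_of_lt_of_le (by positivity) hle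
    simpa using this

/-- Extension of a vector on `γ` by zeros to `γ'`. -/
lemma exists_extension {N : ℕ} (γ γ' : Finset (Fin N)) (hsub : γ ⊆ γ')
    (u : Fin γ.card → ℝ) :
    ∃ v : Fin γ'.card → ℝ, (∑ k, v k = ∑ j, u j) ∧
      ∀ (M : ℕ) (X : Matrix (Fin M) (Fin N) ℝ), subCols X γ' *ᵥ v = subCols X γ *ᵥ u := by
  have hmem : ∀ j : Fin γ.card, γ.orderEmbOfFin rfl j ∈ γ' :=
    fun j => hsub (γ.orderEmbOfFin_mem rfl j)
  set ι : Fin γ.card → Fin γ'.card :=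
    fun j => (γ'.orderIsoOfFin rfl).symm ⟨γ.orderEmbOfFin rfl j, hmem j⟩ with hι
  have key : ∀ j, γ'.orderEmbOfFin rfl (ι j) = γ.orderEmbOfFin rfl j := by
    intro j
    have := (γ'.orderIsoOfFin rfl).apply_symm_apply ⟨γ.orderEmbOfFin rfl j, hmem j⟩
    have h2 := Finset.coe_orderIsoOfFin_apply γ' rfl (ι j)
    rw [hι] at h2 ⊢
    rw [← h2]
    exact congrArg Subtype.val this
  refine ⟨fun k => ∑ j, if ι j = k then u j else 0, ?_, ?_⟩
  · rw [Finset.sum_comm]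
    simp
  · intro M X
    funext i
    simp only [Matrix.mulVec, dotProduct, Finset.mul_sum, mul_ite, mul_zero]
    rw [Finset.sum_comm]
    refine Finset.sum_congr rfl fun j _ => ?_
    rw [Finset.sum_ite_eq]
    simp [subCols, key j]


/-- eq. (S-quad-bound): under (A1), for `∅ ≠ γ ⊆ γ'` with `γ' ∈ S_L`,
`|γ'|/(Mλ̲) ≥ 𝟙ᵀ(X_{γ'}ᵀX_{γ'})⁻¹𝟙 ≥ 𝟙ᵀ(X_γᵀX_γ)⁻¹𝟙 ≥ 1/M`. -/
theorem statement_1 {M N L : ℕ} (X : Matrix (Fin M) (Fin N) ℝ) (lam : ℝ)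
    (hlam0 : 0 < lam) (hlam1 : lam ≤ 1) (hA1 : DesignA1 X L lam)
    (γ γ' : Finset (Fin N)) (hγ : 1 ≤ γ.card) (hsub : γ ⊆ γ') (hγ'L : γ'.card ≤ L) :
    onesQuad X γ' ≤ (γ'.card : ℝ) / ((M : ℝ) * lam) ∧
      onesQuad X γ ≤ onesQuad X γ' ∧
        1 / (M : ℝ) ≤ onesQuad X γ := by
  have hγ' : 1 ≤ γ'.card := le_trans hγ (Finset.card_le_card hsub)
  have hγL : γ.card ≤ L := le_trans (Finset.card_le_card hsub) hγ'L
  rcases Nat.eq_zero_or_pos M with hM0 | hMpos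
  · -- degenerate case M = 0
    subst hM0
    have hg : ∀ σ : Finset (Fin N), gram X σ = 0 := by
      intro σ
      ext j k
      simp [_root_.gram, Matrix.mul_apply]
    have hq : ∀ σ : Finset (Fin N), 1 ≤ σ.card → onesQuad X σ = 0 := by
      intro σ hσ
      have : ¬IsUnit (gram X σ).det := by
        haveI : Nonempty (Fin σ.card) := ⟨⟨0, hσ⟩⟩
        rw [hg σ, Matrix.det_zero]
        simp
      rw [onesQuad, Matrix.nonsing_inv_apply_not_isUnit _ this]
      simp
    rw [hq γ hγ, hq γ' hγ']
    norm_num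
  have hM : 0 < (M : ℝ) := by exact_mod_cast hMpos
  have hc : 0 < (M : ℝ) * lam := by positivity
  -- positive definiteness and inverses
  have pdγ := gram_posDef_s1 hc hA1 γ hγ hγL
  have pdγ' := gram_posDef_s1 hc hA1 γ' hγ' hγ'L
  have hGinv : ∀ (σ : Finset (Fin N)), (gram X σ).PosDef →
      gram X σ *ᵥ ((gram X σ)⁻¹ *ᵥ fun _ => (1:ℝ)) = fun _ => (1:ℝ) := by
    intro σ pd
    rw [Matrix.mulVec_mulVec, Matrix.mul_nonsing_inv _ pd.det_pos.ne'.isUnit,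
      Matrix.one_mulVec]
  set ones : Fin γ.card → ℝ := fun _ => 1 with hones
  set ones' : Fin γ'.card → ℝ := fun _ => 1 with hones'
  set u : Fin γ.card → ℝ := (gram X γ)⁻¹ *ᵥ ones with hu
  set u' : Fin γ'.card → ℝ := (gram X γ')⁻¹ *ᵥ ones' with hu'
  have hGu : gram X γ *ᵥ u = ones := hGinv γ pdγ
  have hGu' : gram X γ' *ᵥ u' = ones' := hGinv γ' pdγ'
  have hquad : onesQuad X γ = ones ⬝ᵥ u := rfl
  have hquad' : onesQuad X γ' = ones' ⬝ᵥ u' := rfl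
  -- F1 : uᵀGu = quad
  have hsym : ∀ (σ : Finset (Fin N)) (v w : Fin σ.card → ℝ),
      v ⬝ᵥ (gram X σ *ᵥ w) = w ⬝ᵥ (gram X σ *ᵥ v) := by
    intro σ v w
    rw [dot_gram, dot_gram, dotProduct_comm]
  have hF1 : u ⬝ᵥ (gram X γ *ᵥ u) = onesQuad X γ := by
    rw [hGu, dotProduct_comm, hquad]
  have hF1' : u' ⬝ᵥ (gram X γ' *ᵥ u') = onesQuad X γ' := by
    rw [hGu', dotProduct_comm, hquad']
  -- Cauchy-Schwarz for dot products
  have CS : ∀ (n : ℕ) (a b : Fin n → ℝ), (a ⬝ᵥ b)^2 ≤ (a ⬝ᵥ a) * (b ⬝ᵥ b) := by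
    intro n a b
    have := Finset.sum_mul_sq_le_sq_mul_sq Finset.univ a b
    simpa [dotProduct, sq] using this
  -- Part 1
  have part1 : onesQuad X γ' ≤ (γ'.card : ℝ) / ((M : ℝ) * lam) := by
    have h1 : (M : ℝ) * lam * (u' ⬝ᵥ u') ≤ onesQuad X γ' := by
      have := hA1.2 γ' hγ' hγ'L u'
      rwa [hF1'] at this
    have h2 : (onesQuad X γ')^2 ≤ (γ'.card : ℝ) * (u' ⬝ᵥ u') := by
      have := CS γ'.card ones' u'
      have hoo : ones' ⬝ᵥ ones' = (γ'.card : ℝ) := by simp [hones', dotProduct]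
      rw [hquad', ← hoo]
      exact this
    have h0 : 0 ≤ onesQuad X γ' :=
      le_trans (mul_nonneg hc.le (dot_self_nonneg u')) h1
    have hcard' : (1:ℝ) ≤ (γ'.card : ℝ) := by exact_mod_cast hγ'
    rw [le_div_iff₀ hc]
    rcases eq_or_lt_of_le h0 with h | h
    · nlinarith
    · nlinarith [mul_le_mul_of_nonneg_left h2 hc.le,
        mul_le_mul_of_nonneg_left h1 (by linarith : (0:ℝ) ≤ (γ'.card : ℝ))]
  -- Part 3
  have part3 : 1 / (M : ℝ) ≤ onesQuad X γ := by
    set A := subCols X γ with hA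
    have haa : (A *ᵥ u) ⬝ᵥ (A *ᵥ u) = onesQuad X γ := by
      rw [← dot_gram, hF1]
    have hab : (A *ᵥ u) ⬝ᵥ (A *ᵥ ones) = (γ.card : ℝ) := by
      rw [← dot_gram, hsym, hGu]
      simp [hones, dotProduct]
    have hbb : (A *ᵥ ones) ⬝ᵥ (A *ᵥ ones) ≤ (γ.card : ℝ)^2 * M := by
      rw [← dot_gram]
      have hentry : ∀ j k : Fin γ.card, gram X γ j k ≤ (M : ℝ) := by
        intro j k
        have hjj := hA1.1 (γ.orderEmbOfFin rfl j)
        have hkk := hA1.1 (γ.orderEmbOfFin rfl k)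
        have hcs := CS M (fun i => X i (γ.orderEmbOfFin rfl j))
          (fun i => X i (γ.orderEmbOfFin rfl k))
        rw [hjj, hkk] at hcs
        have hjk : gram X γ j k =
            (fun i => X i (γ.orderEmbOfFin rfl j)) ⬝ᵥ (fun i => X i (γ.orderEmbOfFin rfl k)) := by
          simp [_root_.gram, subCols, Matrix.mul_apply, dotProduct]
        rw [hjk]
        nlinarith [hM.le]
      calc ones ⬝ᵥ (gram X γ *ᵥ ones) = ∑ j, ∑ k, gram X γ j k := by
            simp [dotProduct, Matrix.mulVec, hones]
        _ ≤ ∑ j : Fin γ.card, ∑ k : Fin γ.card, (M : ℝ) := by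
            refine Finset.sum_le_sum fun j _ => Finset.sum_le_sum fun k _ => hentry j k
        _ = (γ.card : ℝ)^2 * M := by simp [sq]; ring
    have hcs := CS M (A *ᵥ u) (A *ᵥ ones)
    rw [hab, haa] at hcs
    have hcard : (1:ℝ) ≤ (γ.card : ℝ) := Nat.one_le_cast.2 hγ
    have h0 : 0 ≤ onesQuad X γ := by
      rw [← haa]; exact dot_self_nonneg _
    have e1 : ((γ.card : ℝ))^2 ≤ onesQuad X γ * ((γ.card : ℝ)^2 * M) :=
      hcs.trans (mul_le_mul_of_nonneg_left hbb h0)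
    have hcard2 : (0:ℝ) < (γ.card : ℝ)^2 := by nlinarith
    rw [div_le_iff₀ hM]
    have e2 : 1 * ((γ.card : ℝ))^2 ≤ (onesQuad X γ * M) * ((γ.card : ℝ))^2 := by nlinarith
    exact le_of_mul_le_mul_right e2 hcard2
  -- Part 2
  have part2 : onesQuad X γ ≤ onesQuad X γ' := by
    obtain ⟨v, hvs, hvA⟩ := exists_extension γ γ' hsub u
    have hvX := hvA M X
    -- quad = 2 vᵀ1 - vᵀG'v
    have hones_sum : v ⬝ᵥ ones' = u ⬝ᵥ ones := by
      simp [hones, hones', dotProduct, hvs]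
    have hvGv : v ⬝ᵥ (gram X γ' *ᵥ v) = u ⬝ᵥ (gram X γ *ᵥ u) := by
      rw [dot_gram, dot_gram, hvX]
    have hvu' : v ⬝ᵥ (gram X γ' *ᵥ u') = v ⬝ᵥ ones' := by rw [hGu']
    have hu'v : u' ⬝ᵥ (gram X γ' *ᵥ v) = v ⬝ᵥ ones' := by rw [hsym, hvu']
    have hkey : 0 ≤ (v - u') ⬝ᵥ (gram X γ' *ᵥ (v - u')) := by
      rw [dot_gram]
      exact dot_self_nonneg _
    have hexpand : (v - u') ⬝ᵥ (gram X γ' *ᵥ (v - u')) =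
        v ⬝ᵥ (gram X γ' *ᵥ v) - 2 * (v ⬝ᵥ ones') + onesQuad X γ' := by
      rw [Matrix.mulVec_sub, sub_dotProduct, dotProduct_sub, dotProduct_sub,
        hvu', hu'v, hF1']
      ring
    have huones : u ⬝ᵥ (gram X γ *ᵥ u) = u ⬝ᵥ ones := by rw [hGu]
    have hq : onesQuad X γ = u ⬝ᵥ ones := by
      rw [hquad, dotProduct_comm]
    rw [hexpand] at hkey
    rw [hq]
    rw [hvGv, huones, hones_sum] at hkey
    linarith
  exact ⟨part1, part2, part3⟩
end
end

section
/- Let Z ∈ ℝ^{n×p} with ZᵀZ invertible, Q ∈ ℝ^{p×k} with k < p and Qᵀ(ZᵀZ)⁻¹Q invertible, v ∈ ℝ^k, and let R ∈ ℝ^{p×(p−k)} satisfy RᵀQ = 0 with [Q R] invertible. Suppose y = Zμ* + ε for some μ* ∈ ℝ^p with Qᵀμ* = v and some ε ∈ ℝⁿ. Then the constrained least-squares estimator μ̌ = μ̂ − (ZᵀZ)⁻¹Q[Qᵀ(ZᵀZ)⁻¹Q]⁻¹(Qᵀμ̂ − v), where μ̂ = (ZᵀZ)⁻¹Zᵀy,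 satisfies μ̌ = μ* + R(RᵀZᵀZR)⁻¹RᵀZᵀε. -/
open Matrix

noncomputable section

/-- The square block matrix `[Q R]` obtained by concatenating the columns of
`Q ∈ ℝ^{p×k}` and `R ∈ ℝ^{p×(p-k)}`. -/
def blockQR {p k : ℕ} (Q : Matrix (Fin p) (Fin k) ℝ) (R : Matrix (Fin p) (Fin (p - k)) ℝ) :
    Matrix (Fin p) (Fin p) ℝ :=
  Matrix.of fun i j =>
    if h : (j : ℕ) < k then Q i ⟨j, h⟩
    else R i ⟨(j : ℕ) - k, by have := j.isLt; omega⟩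

namespace Statement5Aux

variable {p k : ℕ}

/-- Controlled associativity rewriting for `mulVec`. -/
lemma mv {a b c : ℕ} (M : Matrix (Fin a) (Fin b) ℝ) (N : Matrix (Fin b) (Fin c) ℝ)
    (x : Fin c → ℝ) : M *ᵥ (N *ᵥ x) = (M * N) *ᵥ x :=
  Matrix.mulVec_mulVec x M N

/-- The reindexing equivalence between `Fin p` and `Fin k ⊕ Fin (p - k)`. -/
def colEquiv (hk : k ≤ p) : Fin p ≃ Fin k ⊕ Fin (p - k) :=
  (finCongr (by omega : p = k + (p - k))).trans finSumFinEquiv.symm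

lemma blockQR_eq (hk : k ≤ p) (Q : Matrix (Fin p) (Fin k) ℝ)
    (R : Matrix (Fin p) (Fin (p - k)) ℝ) :
    blockQR Q R = (fromCols Q R).submatrix id (colEquiv hk) := by
  funext i j
  simp only [blockQR, of_apply, submatrix_apply, id_eq]
  by_cases h : (j : ℕ) < k
  · rw [dif_pos h]
    have he : colEquiv hk j = Sum.inl ⟨j, h⟩ := by
      rw [colEquiv, Equiv.trans_apply, Equiv.symm_apply_eq]
      apply Fin.ext; simp
    rw [he, fromCols_apply_inl]
  · rw [dif_neg h]
    have he : colEquiv hk j = Sum.inr ⟨(j : ℕ) - k, by have := j.isLt; omega⟩ := by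
      rw [colEquiv, Equiv.trans_apply, Equiv.symm_apply_eq]
      apply Fin.ext; simp; omega
    rw [he, fromCols_apply_inr]

lemma blockQR_mulVec (hk : k ≤ p) (Q : Matrix (Fin p) (Fin k) ℝ)
    (R : Matrix (Fin p) (Fin (p - k)) ℝ) (a : Fin k → ℝ) (b : Fin (p - k) → ℝ) :
    blockQR Q R *ᵥ (Sum.elim a b ∘ colEquiv hk) = Q *ᵥ a + R *ᵥ b := by
  rw [blockQR_eq hk, submatrix_mulVec_equiv]
  have h : (Sum.elim a b ∘ (colEquiv hk)) ∘ (colEquiv hk).symm = Sum.elim a b := by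
    funext s; simp
  rw [h, fromCols_mulVec_sumElim]
  rfl

end Statement5Aux

open Statement5Aux in
/-- Theorem S1 (iii): if `y = Zμ* + ε` with `Qᵀμ* = v`, then the constrained
least-squares estimator satisfies `μ̌ = μ* + R(RᵀZᵀZR)⁻¹RᵀZᵀε`. -/
theorem statement_5 {n p k : ℕ} (hk : k < p)
    (Z : Matrix (Fin n) (Fin p) ℝ) (Q : Matrix (Fin p) (Fin k) ℝ)
    (R : Matrix (Fin p) (Fin (p - k)) ℝ) (v : Fin k → ℝ)
    (hZ : IsUnit (Zᵀ * Z).det)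
    (hQ : IsUnit (Qᵀ * (Zᵀ * Z)⁻¹ * Q).det)
    (hRQ : Rᵀ * Q = 0) (hQR : IsUnit (blockQR Q R).det)
    (μstar : Fin p → ℝ) (ε : Fin n → ℝ) (hμstar : Qᵀ *ᵥ μstar = v)
    (y : Fin n → ℝ) (hy : y = Z *ᵥ μstar + ε) :
    let μhat := (Zᵀ * Z)⁻¹ *ᵥ (Zᵀ *ᵥ y)
    let μcheck := μhat - ((Zᵀ * Z)⁻¹ * Q * (Qᵀ * (Zᵀ * Z)⁻¹ * Q)⁻¹) *ᵥ (Qᵀ *ᵥ μhat - v)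
    μcheck = μstar + (R * (Rᵀ * (Zᵀ * Z) * R)⁻¹ * Rᵀ * Zᵀ) *ᵥ ε := by
  intro μhat μcheck
  have hkle : k ≤ p := hk.le
  set A := Zᵀ * Z with hA
  set B := Qᵀ * A⁻¹ * Q with hB
  set C := Rᵀ * A * R with hC
  -- basic inverse facts
  have hA1 : A⁻¹ * A = 1 := nonsing_inv_mul A hZ
  have hB1 : B⁻¹ * B = 1 := nonsing_inv_mul B hQ
  have hQRt : Qᵀ * R = 0 := by
    have h := congrArg Matrix.transpose hRQ
    rwa [transpose_mul, transpose_transpose, transpose_zero] at h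
  -- injectivity of [Q R]
  have hMinj : ∀ (a : Fin k → ℝ) (b : Fin (p - k) → ℝ),
      Q *ᵥ a + R *ᵥ b = 0 → a = 0 ∧ b = 0 := by
    intro a b hab
    have hinj : Function.Injective (blockQR Q R).mulVec :=
      mulVec_injective_iff_isUnit.2 ((Matrix.isUnit_iff_isUnit_det _).2 hQR)
    have h0 : blockQR Q R *ᵥ (Sum.elim a b ∘ colEquiv hkle) = blockQR Q R *ᵥ 0 := by
      rw [blockQR_mulVec hkle, hab, mulVec_zero]
    have hz := hinj h0
    constructor
    · funext i
      have h := congrFun hz ((colEquiv hkle).symm (Sum.inl i))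
      simpa using h
    · funext i
      have h := congrFun hz ((colEquiv hkle).symm (Sum.inr i))
      simpa using h
  -- surjectivity of [Q R]
  have hMsurj : ∀ x : Fin p → ℝ, ∃ a b, x = Q *ᵥ a + R *ᵥ b := by
    intro x
    have hM1 : blockQR Q R * (blockQR Q R)⁻¹ = 1 := mul_nonsing_inv _ hQR
    set w := (blockQR Q R)⁻¹ *ᵥ x with hw
    refine ⟨(w ∘ (colEquiv hkle).symm) ∘ Sum.inl, (w ∘ (colEquiv hkle).symm) ∘ Sum.inr, ?_⟩
    have hsplit : Sum.elim ((w ∘ (colEquiv hkle).symm) ∘ Sum.inl)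
        ((w ∘ (colEquiv hkle).symm) ∘ Sum.inr) ∘ colEquiv hkle = w := by
      funext j
      simp only [Function.comp_apply]
      rcases hs : (colEquiv hkle) j with i | i <;>
      · simp only [Sum.elim_inl, Sum.elim_inr, Function.comp_apply]
        rw [← hs, Equiv.symm_apply_apply]
    rw [← blockQR_mulVec hkle, hsplit, hw, mv, hM1, one_mulVec]
  -- Gram matrix kernels
  have hGram : ∀ (m l : ℕ) (W : Matrix (Fin m) (Fin l) ℝ) (x : Fin l → ℝ),
      (Wᵀ * W) *ᵥ x = 0 → W *ᵥ x = 0 := by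
    intro m l W x hx
    have h0 : (W *ᵥ x) ⬝ᵥ (W *ᵥ x) = 0 := by
      have h : x ⬝ᵥ ((Wᵀ * W) *ᵥ x) = 0 := by rw [hx, dotProduct_zero]
      rwa [← mv Wᵀ W x, dotProduct_mulVec, vecMul_transpose] at h
    exact dotProduct_self_eq_zero.mp h0
  -- C is invertible
  have hCker : ∀ u : Fin (p - k) → ℝ, C *ᵥ u = 0 → u = 0 := by
    intro u hu
    have hZR : (Z * R) *ᵥ u = 0 := by
      apply hGram _ _ (Z * R)
      have hCeq : (Z * R)ᵀ * (Z * R) = C := by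
        rw [transpose_mul, hC, hA, Matrix.mul_assoc, Matrix.mul_assoc, Matrix.mul_assoc]
      rw [hCeq, hu]
    have hRu : R *ᵥ u = 0 := by
      have hARu : A *ᵥ (R *ᵥ u) = 0 := by
        rw [hA, ← mv Zᵀ Z (R *ᵥ u), mv Z R u, hZR, mulVec_zero]
      have h : R *ᵥ u = A⁻¹ *ᵥ (A *ᵥ (R *ᵥ u)) := by
        rw [mv A⁻¹ A (R *ᵥ u), hA1, one_mulVec]
      rw [h, hARu, mulVec_zero]
    exact (hMinj 0 u (by rw [mulVec_zero, zero_add, hRu])).2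
  have hCinj : Function.Injective C.mulVec := by
    intro x x' hxx
    have h := hCker (x - x') (by rw [mulVec_sub, hxx, sub_self])
    exact sub_eq_zero.mp h
  have hCu : IsUnit C.det :=
    (Matrix.isUnit_iff_isUnit_det C).1 (mulVec_injective_iff_isUnit.1 hCinj)
  have hC1 : C⁻¹ * C = 1 := nonsing_inv_mul C hCu
  have hC2 : C * C⁻¹ = 1 := mul_nonsing_inv C hCu
  -- the key matrix D annihilates everything
  set D := A⁻¹ - A⁻¹ * Q * B⁻¹ * (Qᵀ * A⁻¹) - R * C⁻¹ * Rᵀ with hD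
  have hB1' : B⁻¹ * (Qᵀ * (A⁻¹ * Q)) = 1 := by
    rw [← Matrix.mul_assoc Qᵀ A⁻¹ Q]; exact hB1
  have hDQ : D * Q = 0 := by
    rw [hD, Matrix.sub_mul, Matrix.sub_mul]
    simp only [Matrix.mul_assoc]
    rw [hB1', Matrix.mul_one, hRQ, Matrix.mul_zero, Matrix.mul_zero, sub_self, sub_zero]
  have hDAR : D * (A * R) = 0 := by
    rw [hD, Matrix.sub_mul, Matrix.sub_mul]
    have hA1' : A⁻¹ * (A * R) = R := by rw [← Matrix.mul_assoc, hA1, Matrix.one_mul]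
    have hC1' : C⁻¹ * (Rᵀ * (A * R)) = 1 := by
      rw [← Matrix.mul_assoc Rᵀ A R]; exact hC1
    simp only [Matrix.mul_assoc]
    rw [hA1', hQRt, Matrix.mul_zero, Matrix.mul_zero, Matrix.mul_zero, hC1',
      Matrix.mul_one, sub_zero, sub_self]
  have hDzero : ∀ x : Fin p → ℝ, D *ᵥ x = 0 := by
    intro x
    set b := C⁻¹ *ᵥ (Rᵀ *ᵥ x) with hb
    set w := x - (A * R) *ᵥ b with hw
    have hRw : Rᵀ *ᵥ w = 0 := by
      rw [hw, mulVec_sub, hb, mv (A * R) C⁻¹, mv Rᵀ (A * R * C⁻¹)]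
      have h : Rᵀ * (A * R * C⁻¹) = C * C⁻¹ := by
        rw [← Matrix.mul_assoc Rᵀ (A * R) C⁻¹, ← Matrix.mul_assoc Rᵀ A R]
      rw [h, hC2, one_mulVec, sub_self]
    obtain ⟨a, b', hab⟩ := hMsurj w
    have hb' : b' = 0 := by
      have h0 : (Rᵀ * R) *ᵥ b' = 0 := by
        have h := congrArg (fun z => Rᵀ *ᵥ z) hab
        rw [hRw, mulVec_add, mv Rᵀ Q, mv Rᵀ R, hRQ, zero_mulVec, zero_add] at h
        exact h.symm
      have hRb : R *ᵥ b' = 0 := hGram _ _ R b' h0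
      exact (hMinj 0 b' (by rw [mulVec_zero, zero_add, hRb])).2
    have hxdecomp : x = Q *ᵥ a + (A * R) *ᵥ b := by
      rw [hb', mulVec_zero, add_zero] at hab
      rw [hw] at hab
      rw [sub_eq_iff_eq_add.mp hab]
    rw [hxdecomp, mulVec_add, mv D Q, mv D (A * R), hDQ, hDAR, zero_mulVec, zero_mulVec,
      add_zero]
  -- compute μhat
  have hμhat : μhat = μstar + A⁻¹ *ᵥ (Zᵀ *ᵥ ε) := by
    show A⁻¹ *ᵥ (Zᵀ *ᵥ y) = _
    rw [hy, mulVec_add, mulVec_add, mv Zᵀ Z μstar, ← hA, mv A⁻¹ A μstar, hA1, one_mulVec]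
  have hconstraint : Qᵀ *ᵥ μhat - v = Qᵀ *ᵥ (A⁻¹ *ᵥ (Zᵀ *ᵥ ε)) := by
    rw [hμhat, mulVec_add, hμstar, add_sub_cancel_left]
  show μhat - (A⁻¹ * Q * B⁻¹) *ᵥ (Qᵀ *ᵥ μhat - v) = μstar + (R * C⁻¹ * Rᵀ * Zᵀ) *ᵥ ε
  rw [hconstraint, hμhat, mv Qᵀ A⁻¹, mv (A⁻¹ * Q * B⁻¹) (Qᵀ * A⁻¹),
    ← mv (R * C⁻¹ * Rᵀ) Zᵀ ε]
  have hkey := hDzero (Zᵀ *ᵥ ε)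
  rw [hD, Matrix.sub_mulVec, Matrix.sub_mulVec] at hkey
  rw [add_sub_assoc, sub_eq_zero.mp hkey]
end
end

section
/- Let Q ∈ ℝ^{p×k} and R ∈ ℝ^{p×(p−k)} satisfy RᵀQ = 0 and [Q R] invertible, and let A ∈ ℝ^{p×p} be symmetric positive definite. Then Q(QᵀA⁻¹Q)⁻¹Qᵀ = A − AR(RᵀAR)⁻¹RᵀA. -/
open Matrix

noncomputable section

/-- The vector in `ℝ^p` obtained by concatenating `x ∈ ℝ^k` and `y ∈ ℝ^{p-k}`. -/
def padQR {p k : ℕ} (x : Fin k → ℝ) (y : Fin (p - k) → ℝ) : Fin p → ℝ :=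
  fun j => if h : (j : ℕ) < k then x ⟨j, h⟩
    else y ⟨(j : ℕ) - k, by have := j.isLt; omega⟩

lemma blockQR_mulVec {p k : ℕ} (hk : k ≤ p) (Q : Matrix (Fin p) (Fin k) ℝ)
    (R : Matrix (Fin p) (Fin (p - k)) ℝ) (x : Fin k → ℝ) (y : Fin (p - k) → ℝ) :
    blockQR Q R *ᵥ padQR x y = Q *ᵥ x + R *ᵥ y := by
  funext i
  have hp : k + (p - k) = p := by omega
  simp only [mulVec, dotProduct, blockQR, padQR, of_apply, Pi.add_apply]
  rw [← (finCongr hp).sum_comp, Fin.sum_univ_add]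
  congr 1
  · refine Finset.sum_congr rfl fun j _ => ?_
    have h1 : ((finCongr hp (Fin.castAdd (p - k) j) : Fin p) : ℕ) = (j : ℕ) := rfl
    rw [dif_pos (h1 ▸ j.isLt), dif_pos (h1 ▸ j.isLt)]
    congr 1 <;> exact congrArg _ (Fin.ext rfl)
  · refine Finset.sum_congr rfl fun j _ => ?_
    have h1 : ((finCongr hp (Fin.natAdd k j) : Fin p) : ℕ) = k + (j : ℕ) := rfl
    have h2 : ¬ ((finCongr hp (Fin.natAdd k j) : Fin p) : ℕ) < k := by rw [h1]; omega
    rw [dif_neg h2, dif_neg h2]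
    congr 1 <;> exact congrArg _ (Fin.ext (by simp only [h1]; omega))

lemma blockQR_transpose_mul_eq_zero {p k : ℕ} (Q : Matrix (Fin p) (Fin k) ℝ)
    (R : Matrix (Fin p) (Fin (p - k)) ℝ) (M : Matrix (Fin p) (Fin p) ℝ)
    (hQ : Qᵀ * M = 0) (hR : Rᵀ * M = 0) : (blockQR Q R)ᵀ * M = 0 := by
  ext a b
  simp only [mul_apply, transpose_apply, blockQR, of_apply, Matrix.zero_apply]
  by_cases h : (a : ℕ) < k
  · simp only [dif_pos h]
    have := congrFun (congrFun hQ ⟨a, h⟩) b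
    simpa [mul_apply] using this
  · simp only [dif_neg h]
    have := congrFun (congrFun hR ⟨(a : ℕ) - k, by have := a.isLt; omega⟩) b
    simpa [mul_apply] using this

lemma posDef_conj {p m : ℕ} {A : Matrix (Fin p) (Fin p) ℝ} (hA : A.PosDef)
    (R : Matrix (Fin p) (Fin m) ℝ) (hR : ∀ y, R *ᵥ y = 0 → y = 0) :
    (Rᵀ * A * R).PosDef := by
  refine Matrix.PosDef.of_dotProduct_mulVec_pos ?_ ?_
  · have := isHermitian_conjTranspose_mul_mul R hA.isHermitian
    simpa [conjTranspose_eq_transpose_of_trivial] using this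
  · intro y hy
    have hRy : R *ᵥ y ≠ 0 := fun h => hy (hR y h)
    have h2 := hA.dotProduct_mulVec_pos hRy
    have key : y ⬝ᵥ ((Rᵀ * A * R) *ᵥ y) = (R *ᵥ y) ⬝ᵥ (A *ᵥ (R *ᵥ y)) := by
      rw [← mulVec_mulVec, ← mulVec_mulVec, dotProduct_mulVec, vecMul_transpose]
    simpa [star_trivial, key] using h2

/-- Lemma S2, eq. (S-716eq): if `RᵀQ = 0`, `[Q R]` is invertible and `A` is
symmetric positive definite, then `Q(QᵀA⁻¹Q)⁻¹Qᵀ = A − AR(RᵀAR)⁻¹RᵀA`. -/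
theorem statement_6 {p k : ℕ} (hk : k < p)
    (Q : Matrix (Fin p) (Fin k) ℝ) (R : Matrix (Fin p) (Fin (p - k)) ℝ)
    (hRQ : Rᵀ * Q = 0) (hQR : IsUnit (blockQR Q R).det)
    (A : Matrix (Fin p) (Fin p) ℝ) (hA : A.PosDef) :
    Q * (Qᵀ * A⁻¹ * Q)⁻¹ * Qᵀ = A - A * R * (Rᵀ * A * R)⁻¹ * Rᵀ * A := by
  have hkle : k ≤ p := hk.le
  have hAu : IsUnit A.det := isUnit_iff_ne_zero.mpr hA.det_pos.ne'
  have hAinv : A⁻¹.PosDef := hA.inv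
  have hAt : Aᵀ = A := by
    have := hA.isHermitian.eq
    simpa [conjTranspose_eq_transpose_of_trivial] using this
  have hAit : A⁻¹ᵀ = A⁻¹ := by
    have := hAinv.isHermitian.eq
    simpa [conjTranspose_eq_transpose_of_trivial] using this
  -- injectivity of B = [Q R]
  have hBinj : Function.Injective (fun v => blockQR Q R *ᵥ v) :=
    Matrix.mulVec_injective_iff_isUnit.mpr ((Matrix.isUnit_iff_isUnit_det _).mpr hQR)
  have hBzero : ∀ v, blockQR Q R *ᵥ v = 0 → v = 0 := by
    intro v hv
    have := hBinj (a₁ := v) (a₂ := 0) (by simpa using hv)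
    exact this
  have hpad0 : (padQR (p := p) (k := k) 0 0) = (0 : Fin p → ℝ) := by
    funext j; unfold padQR; split <;> rfl
  -- Q and R have trivial kernels
  have hQinj : ∀ x : Fin k → ℝ, Q *ᵥ x = 0 → x = 0 := by
    intro x hx
    have h1 : blockQR Q R *ᵥ padQR x 0 = 0 := by
      rw [blockQR_mulVec hkle]; simp [hx]
    have h2 := hBzero _ h1
    funext j
    have h3 := congrFun h2 ⟨(j : ℕ), lt_of_lt_of_le j.isLt hkle⟩
    unfold padQR at h3
    rw [dif_pos j.isLt] at h3
    simpa using h3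
  have hRinj : ∀ y : Fin (p - k) → ℝ, R *ᵥ y = 0 → y = 0 := by
    intro y hy
    have h1 : blockQR Q R *ᵥ padQR 0 y = 0 := by
      rw [blockQR_mulVec hkle]; simp [hy]
    have h2 := hBzero _ h1
    funext j
    have hjk : k + (j : ℕ) < p := by have := j.isLt; omega
    have h3 := congrFun h2 ⟨k + (j : ℕ), hjk⟩
    unfold padQR at h3
    rw [dif_neg (show ¬ k + (j : ℕ) < k by omega)] at h3
    simpa using h3
  -- positive definiteness of the Gram matrices
  have hG : (Qᵀ * A⁻¹ * Q).PosDef := posDef_conj hAinv Q hQinj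
  have hH : (Rᵀ * A * R).PosDef := posDef_conj hA R hRinj
  have hGu : IsUnit (Qᵀ * A⁻¹ * Q).det := isUnit_iff_ne_zero.mpr hG.det_pos.ne'
  have hHu : IsUnit (Rᵀ * A * R).det := isUnit_iff_ne_zero.mpr hH.det_pos.ne'
  -- the matrix C = [Q, A R] is invertible
  have hCinj : ∀ v : Fin p → ℝ, blockQR Q (A * R) *ᵥ v = 0 → v = 0 := by
    intro v hv
    set x : Fin k → ℝ := fun j => v ⟨(j : ℕ), lt_of_lt_of_le j.isLt hkle⟩ with hxdef
    set y : Fin (p - k) → ℝ := fun j => v ⟨k + (j : ℕ), by have := j.isLt; omega⟩ with hydef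
    have hvpad : v = padQR x y := by
      funext j
      unfold padQR
      split
      · simp [hxdef]
      · rename_i h
        have : (⟨k + ((j : ℕ) - k), by have := j.isLt; omega⟩ : Fin p) = j :=
          Fin.ext (by simp; omega)
        simp [hydef, this]
    rw [hvpad, blockQR_mulVec hkle] at hv
    have hy0 : y = 0 := by
      apply fun h => (Matrix.mulVec_injective_iff_isUnit.mpr hH.isUnit) (a₁ := y) (a₂ := 0) h
      have h1 := congrArg (fun w => Rᵀ *ᵥ w) hv
      simp only [Matrix.mulVec_add, Matrix.mulVec_mulVec, Matrix.mulVec_zero] at h1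
      rw [← Matrix.mul_assoc] at h1
      rw [hRQ] at h1
      simpa [Matrix.mul_assoc] using h1
    have hx0 : x = 0 := by
      apply hQinj
      rw [hy0] at hv
      simpa using hv
    rw [hvpad, hx0, hy0, hpad0]
  have hCu : IsUnit (blockQR Q (A * R)).det := by
    rw [← Matrix.isUnit_iff_isUnit_det]
    rw [← Matrix.mulVec_injective_iff_isUnit]
    intro v w hvw
    have : blockQR Q (A * R) *ᵥ (v - w) = 0 := by
      rw [Matrix.mulVec_sub, hvw, sub_self]
    have := hCinj _ this
    exact sub_eq_zero.mp this
  -- orthogonality transposed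
  have hQRt : Qᵀ * R = 0 := by
    have := congrArg Matrix.transpose hRQ
    simpa [Matrix.transpose_mul] using this
  set Z : Matrix (Fin p) (Fin p) ℝ :=
    A⁻¹ * Q * (Qᵀ * A⁻¹ * Q)⁻¹ * Qᵀ * A⁻¹ + R * (Rᵀ * A * R)⁻¹ * Rᵀ with hZdef
  have hQZ : Qᵀ * (Z - A⁻¹) = 0 := by
    rw [hZdef, Matrix.mul_sub, Matrix.mul_add]
    have e1 : Qᵀ * (A⁻¹ * Q * (Qᵀ * A⁻¹ * Q)⁻¹ * Qᵀ * A⁻¹)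
        = (Qᵀ * A⁻¹ * Q) * (Qᵀ * A⁻¹ * Q)⁻¹ * (Qᵀ * A⁻¹) := by
      simp only [Matrix.mul_assoc]
    have e2 : Qᵀ * (R * (Rᵀ * A * R)⁻¹ * Rᵀ) = (Qᵀ * R) * ((Rᵀ * A * R)⁻¹ * Rᵀ) := by
      simp only [Matrix.mul_assoc]
    rw [e1, e2, Matrix.mul_nonsing_inv _ hGu, hQRt]
    simp
  have hRZ : (A * R)ᵀ * (Z - A⁻¹) = 0 := by
    have hARt : (A * R)ᵀ = Rᵀ * A := by rw [Matrix.transpose_mul, hAt]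
    have e0 : Rᵀ * A * A⁻¹ = Rᵀ := Matrix.mul_nonsing_inv_cancel_right _ _ hAu
    rw [hARt, hZdef, Matrix.mul_sub, Matrix.mul_add]
    have e1 : Rᵀ * A * (A⁻¹ * Q * (Qᵀ * A⁻¹ * Q)⁻¹ * Qᵀ * A⁻¹)
        = (Rᵀ * A * A⁻¹) * Q * ((Qᵀ * A⁻¹ * Q)⁻¹ * (Qᵀ * A⁻¹)) := by
      simp only [Matrix.mul_assoc]
    have e2 : Rᵀ * A * (R * (Rᵀ * A * R)⁻¹ * Rᵀ)
        = (Rᵀ * A * R) * (Rᵀ * A * R)⁻¹ * Rᵀ := by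
      simp only [Matrix.mul_assoc]
    rw [e1, e2, e0, Matrix.mul_nonsing_inv _ hHu]
    have e3 : Rᵀ * Q * ((Qᵀ * A⁻¹ * Q)⁻¹ * (Qᵀ * A⁻¹)) = 0 := by
      rw [hRQ, Matrix.zero_mul]
    rw [e3]
    simp
  have hCZ : (blockQR Q (A * R))ᵀ * (Z - A⁻¹) = 0 :=
    blockQR_transpose_mul_eq_zero _ _ _ hQZ hRZ
  have hZeq : Z = A⁻¹ := by
    have hCtu : IsUnit ((blockQR Q (A * R))ᵀ).det := by
      rwa [Matrix.det_transpose]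
    have h1 := congrArg (fun M => ((blockQR Q (A * R))ᵀ)⁻¹ * M) hCZ
    simp only [← Matrix.mul_assoc, Matrix.nonsing_inv_mul _ hCtu, Matrix.one_mul,
      Matrix.mul_zero] at h1
    exact sub_eq_zero.mp h1
  have key : Q * (Qᵀ * A⁻¹ * Q)⁻¹ * Qᵀ + A * R * (Rᵀ * A * R)⁻¹ * Rᵀ * A = A := by
    have h1 : A * Z * A = A := by
      rw [hZeq, Matrix.mul_nonsing_inv _ hAu, Matrix.one_mul]
    calc Q * (Qᵀ * A⁻¹ * Q)⁻¹ * Qᵀ + A * R * (Rᵀ * A * R)⁻¹ * Rᵀ * A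
        = A * Z * A := by
          rw [hZdef]
          simp only [Matrix.mul_add, Matrix.add_mul, Matrix.mul_assoc,
            Matrix.nonsing_inv_mul _ hAu, Matrix.mul_one,
            Matrix.mul_nonsing_inv_cancel_left _ _ hAu]
      _ = A := h1
  rw [eq_sub_iff_add_eq]
  calc Q * (Qᵀ * A⁻¹ * Q)⁻¹ * Qᵀ + A * R * (Rᵀ * A * R)⁻¹ * Rᵀ * A = A := key
end
end

section
/- Let B ∈ ℝ^{M×ℓ} (ℓ ≥ 2) have BᵀB invertible, and let D ∈ ℝ^{ℓ×(ℓ−1)} be the matrix whose first ℓ−1 rows form the identity I_{ℓ−1} and whose last row is (−1,…,−1). Then det(DᵀBᵀBD) = det(BᵀB) · 𝟙ᵀ(BᵀB)⁻¹𝟙, where 𝟙 ∈ ℝ^ℓ is the all-ones vector. -/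
open Matrix

noncomputable section

/-- The matrix `D ∈ ℝ^{ℓ×(ℓ-1)}` whose first `ℓ-1` rows form the identity and whose last row
is `(-1, …, -1)`. -/
def Dmat (ℓ : ℕ) : Matrix (Fin ℓ) (Fin (ℓ - 1)) ℝ :=
  Matrix.of fun i j => if (i : ℕ) = ℓ - 1 then -1 else if (i : ℕ) = (j : ℕ) then 1 else 0

/-- Sum-type version of `Dmat`. -/
def Dsum (n : ℕ) : Matrix (Fin n ⊕ Fin 1) (Fin n) ℝ :=
  fromRows 1 (of fun _ _ => (-1 : ℝ))

theorem aux_statement8 (n M : ℕ) (B : Matrix (Fin M) (Fin n ⊕ Fin 1) ℝ)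
    (hB : IsUnit (Bᵀ * B).det) :
    ((Dsum n)ᵀ * (Bᵀ * B) * Dsum n).det =
      (Bᵀ * B).det * ((fun _ => (1 : ℝ)) ⬝ᵥ ((Bᵀ * B)⁻¹ *ᵥ fun _ => (1 : ℝ))) := by
  set A := Bᵀ * B with hA
  have hAs : Aᵀ = A := by rw [hA, Matrix.transpose_mul, Matrix.transpose_transpose]
  set u : (Fin n ⊕ Fin 1) → ℝ := fun _ => 1 with hu
  set c : (Fin n ⊕ Fin 1) → ℝ := A⁻¹ *ᵥ u with hc
  set s : ℝ := u ⬝ᵥ c with hs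
  have hAc : A *ᵥ c = u := by
    rw [hc, Matrix.mulVec_mulVec, Matrix.mul_nonsing_inv _ hB, Matrix.one_mulVec]
  -- s ≠ 0
  have hsBc : s = (B *ᵥ c) ⬝ᵥ (B *ᵥ c) := by
    have h1 : s = (A *ᵥ c) ⬝ᵥ c := by rw [hAc]
    rw [h1, hA, ← Matrix.mulVec_mulVec, dotProduct_comm, Matrix.dotProduct_mulVec,
      Matrix.vecMul_transpose]
  have hs0 : s ≠ 0 := by
    intro h0
    have hBc : B *ᵥ c = 0 := by
      rw [h0] at hsBc
      exact (dotProduct_self_eq_zero).mp hsBc.symm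
    have : A *ᵥ c = 0 := by
      rw [hA, ← Matrix.mulVec_mulVec, hBc, Matrix.mulVec_zero]
    rw [hAc] at this
    have := congrFun this (Sum.inr 0)
    simp [hu] at this
  -- column sums of Dsum vanish
  have hcolsum : (Dsum n)ᵀ * replicateCol (Fin 1) u = 0 := by
    ext j k
    simp [Matrix.mul_apply, Fintype.sum_sum_type, Dsum, Matrix.one_apply, hu,
      Finset.sum_ite_eq]
  have hrowD : replicateRow (Fin 1) u * Dsum n = 0 := by
    ext k j
    simp [Matrix.mul_apply, Fintype.sum_sum_type, Dsum, Matrix.one_apply, hu,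
      Finset.sum_ite_eq]
  set α : ℝ := s / (n + 1) with hα
  have hn1 : ((n : ℝ) + 1) ≠ 0 := by positivity
  set E₁ : Matrix (Fin n ⊕ Fin 1) (Fin n ⊕ Fin 1) ℝ :=
    fromCols (Dsum n) (replicateCol (Fin 1) u) with hE₁
  set T : Matrix (Fin n) (Fin 1) ℝ := of fun j _ => c (Sum.inl j) - α with hT
  set K : Matrix (Fin n ⊕ Fin 1) (Fin n ⊕ Fin 1) ℝ :=
    fromBlocks 1 T 0 (of fun _ _ => α) with hK
  set E : Matrix (Fin n ⊕ Fin 1) (Fin n ⊕ Fin 1) ℝ :=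
    fromCols (Dsum n) (replicateCol (Fin 1) c) with hE
  have hsum_c : ∑ i : Fin n ⊕ Fin 1, c i = s := by
    rw [hs, dotProduct, hu]; simp
  have hEK : E₁ * K = E := by
    have h2 : Dsum n * T + replicateCol (Fin 1) u * (of fun _ _ => α : Matrix (Fin 1) (Fin 1) ℝ) = replicateCol (Fin 1) c := by
      ext i k
      rcases i with i | i
      · simp [Matrix.add_apply, Matrix.mul_apply, Fintype.sum_sum_type, Dsum, hT,
          Matrix.one_apply, Finset.sum_ite_eq, hu]
      · have h3 : ∑ j : Fin n, c (Sum.inl j) = s - c (Sum.inr 0) := by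
          rw [← hsum_c, Fintype.sum_sum_type]
          simp [Fin.sum_univ_one]
        have h4 : (i : Fin 1) = 0 := Subsingleton.elim _ _
        simp [Matrix.add_apply, Matrix.mul_apply, Fintype.sum_sum_type, Dsum, hT, hu,
          Finset.sum_sub_distrib, h3, h4]
        rw [hα]
        field_simp
        ring
    rw [hE₁, hK, fromCols_mul_fromBlocks, h2, hE]
    simp
  have hE₁tE₁ : E₁ᵀ * E₁ = fromBlocks ((Dsum n)ᵀ * Dsum n) 0 0 (of fun _ _ => ((n : ℝ) + 1)) := by
    have hblock : replicateRow (Fin 1) u * replicateCol (Fin 1) u = of fun _ _ => ((n : ℝ) + 1) := by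
      ext k k'
      simp [Matrix.mul_apply, Fintype.sum_sum_type, hu]
    rw [hE₁, transpose_fromCols, fromRows_mul_fromCols, transpose_replicateCol, hcolsum, hrowD,
      hblock]
  have hDtD : ((Dsum n)ᵀ * Dsum n).det = (n : ℝ) + 1 := by
    have h1 : (Dsum n)ᵀ * Dsum n =
        1 + (replicateCol (Fin 1) (fun _ : Fin n => (1:ℝ)) * replicateRow (Fin 1) (fun _ : Fin n => (1:ℝ)) : Matrix (Fin n) (Fin n) ℝ) := by
      ext i j
      simp [Matrix.mul_apply, Fintype.sum_sum_type, Dsum, Matrix.one_apply,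
        Finset.sum_ite_eq, Matrix.add_apply]
      by_cases h : i = j <;> simp [h, Finset.sum_ite_eq, eq_comm]
    rw [h1]
    erw [Matrix.det_one_add_replicateCol_mul_replicateRow]
    simp [dotProduct]
    ring
  have hAcolc : A * replicateCol (Fin 1) c = replicateCol (Fin 1) u := by
    rw [← Matrix.replicateCol_mulVec, hAc]
  have hcA : replicateRow (Fin 1) c * A = replicateRow (Fin 1) u := by
    have : c ᵥ* A = u := by rw [← hAs, Matrix.vecMul_transpose, hAc]
    calc replicateRow (Fin 1) c * A = (Aᵀ * replicateCol (Fin 1) c)ᵀ := by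
          rw [Matrix.transpose_mul, Matrix.transpose_replicateCol, Matrix.transpose_transpose]
      _ = replicateRow (Fin 1) u := by
          rw [hAs, hAcolc, Matrix.transpose_replicateCol]
  have hEtAE : Eᵀ * A * E = fromBlocks ((Dsum n)ᵀ * A * Dsum n) 0 0 (of fun _ _ => s) := by
    have hAE : A * E = fromCols (A * Dsum n) (replicateCol (Fin 1) u) := by
      rw [hE, mul_fromCols, hAcolc]
    have hEAE : Eᵀ * A * E = Eᵀ * (A * E) := Matrix.mul_assoc _ _ _
    have h3 : replicateRow (Fin 1) c * replicateCol (Fin 1) u = of fun _ _ => s := by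
      ext k k'
      simp [Matrix.mul_apply, hs, dotProduct, hu, mul_comm]
    have hb1 : (Dsum n)ᵀ * (A * Dsum n) = (Dsum n)ᵀ * A * Dsum n := (Matrix.mul_assoc _ _ _).symm
    have hb3 : replicateRow (Fin 1) c * (A * Dsum n) = 0 := by
      rw [← Matrix.mul_assoc, hcA, hrowD]
    rw [hEAE, hAE, hE, transpose_fromCols, transpose_replicateCol, fromRows_mul_fromCols,
      hb1, hb3, hcolsum, h3]
  -- determinants
  have hdetE₁sq : E₁.det * E₁.det = ((n : ℝ) + 1) * ((n : ℝ) + 1) := by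
    have := congrArg Matrix.det hE₁tE₁
    rw [Matrix.det_mul, Matrix.det_transpose, Matrix.det_fromBlocks_zero₂₁, hDtD,
      Matrix.det_fin_one] at this
    simpa using this
  have hdetK : K.det = α := by
    rw [hK, Matrix.det_fromBlocks_zero₂₁, Matrix.det_one, Matrix.det_fin_one, one_mul]
    rfl
  have hdetE : E.det * E.det = s * s := by
    rw [← hEK, Matrix.det_mul, hdetK]
    have : E₁.det * α * (E₁.det * α) = (E₁.det * E₁.det) * (α * α) := by ring
    rw [this, hdetE₁sq, hα]
    field_simp
  have hmain : ((Dsum n)ᵀ * A * Dsum n).det * s = A.det * (s * s) := by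
    have h1 := congrArg Matrix.det hEtAE
    rw [Matrix.det_mul, Matrix.det_mul, Matrix.det_transpose] at h1
    rw [Matrix.det_fromBlocks_zero₂₁, Matrix.det_fin_one] at h1
    have : E.det * A.det * E.det = A.det * (E.det * E.det) := by ring
    rw [this, hdetE] at h1
    simpa using h1.symm
  exact mul_right_cancel₀ hs0 (by rw [hmain]; ring)

/-- eq. (S-det-likelihood): for `B ∈ ℝ^{M×ℓ}` with `BᵀB` invertible,
`det(DᵀBᵀBD) = det(BᵀB) · 𝟙ᵀ(BᵀB)⁻¹𝟙`. -/
theorem statement_8 {M ℓ : ℕ} (hℓ : 2 ≤ ℓ) (B : Matrix (Fin M) (Fin ℓ) ℝ)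
    (hB : IsUnit (Bᵀ * B).det) :
    ((Dmat ℓ)ᵀ * (Bᵀ * B) * Dmat ℓ).det =
      (Bᵀ * B).det * ((fun _ => (1 : ℝ)) ⬝ᵥ ((Bᵀ * B)⁻¹ *ᵥ fun _ => (1 : ℝ))) := by
  obtain ⟨n, rfl⟩ : ∃ n, ℓ = n + 1 := ⟨ℓ - 1, by omega⟩
  set e : Fin n ⊕ Fin 1 ≃ Fin (n + 1) := finSumFinEquiv with he
  set B' : Matrix (Fin M) (Fin n ⊕ Fin 1) ℝ := B.submatrix id ⇑e with hB'
  have hDsub : Dmat (n + 1) = (Dsum n).submatrix ⇑e.symm id := by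
    ext i j
    rw [Matrix.submatrix_apply, id_eq]
    rcases h : e.symm i with k | k
    · have hi : i = e (Sum.inl k) := by rw [← h, Equiv.apply_symm_apply]
      have hik : (i : ℕ) = (k : ℕ) := by
        rw [hi, he, finSumFinEquiv_apply_left]; simp
      have hkn : (k : ℕ) < n := k.isLt
      have hne : ¬((i : ℕ) = n + 1 - 1) := by omega
      simp [Dmat, Dsum, hne, hik, Matrix.one_apply, Fin.ext_iff]
      intro h'
      exact absurd h' (by omega)
    · have hi : i = e (Sum.inr k) := by rw [← h, Equiv.apply_symm_apply]
      have hik : (i : ℕ) = n := by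
        rw [hi, he, finSumFinEquiv_apply_right]
        simp [Fin.eq_zero k]
      simp [Dmat, Dsum, hik]
  have hA' : (Bᵀ * B).submatrix ⇑e ⇑e = B'ᵀ * B' := by
    have h1 := Matrix.submatrix_mul_equiv Bᵀ B ⇑e (Equiv.refl (Fin M)) ⇑e
    simp only [Equiv.coe_refl] at h1
    rw [hB', Matrix.transpose_submatrix, h1]
  have hLHS : (Dmat (n + 1))ᵀ * (Bᵀ * B) * Dmat (n + 1) =
      (Dsum n)ᵀ * (B'ᵀ * B') * Dsum n := by
    have h1 : Bᵀ * B = (B'ᵀ * B').submatrix ⇑e.symm ⇑e.symm := by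
      rw [← hA', Matrix.submatrix_submatrix]
      simp
    rw [hDsub, Matrix.transpose_submatrix, h1, Matrix.submatrix_mul_equiv,
      Matrix.submatrix_mul_equiv, Matrix.submatrix_id_id]
  have hdetA : (B'ᵀ * B').det = (Bᵀ * B).det := by
    rw [← hA', Matrix.det_submatrix_equiv_self]
  have hBunit : IsUnit (B'ᵀ * B').det := by rw [hdetA]; exact hB
  have hdot : (fun _ => (1 : ℝ)) ⬝ᵥ ((B'ᵀ * B')⁻¹ *ᵥ fun _ => (1 : ℝ)) =
      (fun _ => (1 : ℝ)) ⬝ᵥ ((Bᵀ * B)⁻¹ *ᵥ fun _ => (1 : ℝ)) := by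
    rw [← hA', Matrix.inv_submatrix_equiv]
    simp only [dotProduct, Matrix.mulVec, Matrix.submatrix_apply, one_mul, mul_one]
    refine Fintype.sum_equiv e _ _ fun x => ?_
    exact Fintype.sum_equiv e _ _ fun y => rfl
  calc ((Dmat (n + 1))ᵀ * (Bᵀ * B) * Dmat (n + 1)).det
      = ((Dsum n)ᵀ * (B'ᵀ * B') * Dsum n).det := congrArg Matrix.det hLHS
    _ = (B'ᵀ * B').det * ((fun _ => (1 : ℝ)) ⬝ᵥ ((B'ᵀ * B')⁻¹ *ᵥ fun _ => (1 : ℝ))) :=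
        aux_statement8 n M B' hBunit
    _ = (Bᵀ * B).det * ((fun _ => (1 : ℝ)) ⬝ᵥ ((Bᵀ * B)⁻¹ *ᵥ fun _ => (1 : ℝ))) := by
        rw [hdetA, hdot]
end
end

section
/- Let X_γ ∈ ℝ^{M×ℓ} (ℓ ≥ 1) with X_γᵀX_γ invertible, y ∈ ℝ^M, and φ > 0. Define μ̂_γ = (X_γᵀX_γ)⁻¹X_γᵀy, μ̌_γ = μ̂_γ + ((1 − 𝟙ᵀμ̂_γ)/(𝟙ᵀ(X_γᵀX_γ)⁻¹𝟙))(X_γᵀX_γ)⁻¹𝟙, and b_γ = (1 − 𝟙ᵀμ̂_γ)²/(𝟙ᵀ(X_γᵀX_γ)⁻¹𝟙). Parameterizing points of the simplex Δ^{ℓ−1} by their first ℓ−1 coordinates ũ ∈ Δ̃^{ℓ−1} (so u = (ũ, 1 − Σᵢũᵢ)), one has the identity ∫_{Δ̃^{ℓ−1}} exp(−(φ/2)‖y − X_γ u(ũ)‖₂²) dũ = (2π/φ)^{(ℓ−1)/2} det(DᵀX_γᵀX_γD)^{−1/2} exp(−(φ/2)(‖y − X_γ μ̂_γ‖₂² +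 b_γ)) · ℙ(Ũ ∈ Δ̃^{ℓ−1}), where Ũ is a Gaussian random vector in ℝ^{ℓ−1} with mean Π μ̌_γ and covariance matrix (φ DᵀX_γᵀX_γD)⁻¹. -/
open Matrix MeasureTheory BigOperators

noncomputable section

/-- The lower-dimensional simplex `Δ̃^k = {ũ ∈ ℝ^k : ũᵢ ≥ 0, Σᵢ ũᵢ ≤ 1}`. -/
def simplexTilde (k : ℕ) : Set (Fin k → ℝ) :=
  {u | (∀ i, 0 ≤ u i) ∧ ∑ i, u i ≤ 1}

/-- The parameterization of `Δ^{ℓ-1}` by its first `ℓ-1` coordinates: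
`ũ ∈ ℝ^{ℓ-1} ↦ u = (ũ, 1 − Σᵢ ũᵢ) ∈ ℝ^ℓ`. -/
def liftSimplex (ℓ : ℕ) (u : Fin (ℓ - 1) → ℝ) : Fin ℓ → ℝ :=
  fun i => if h : (i : ℕ) < ℓ - 1 then u ⟨i, h⟩ else 1 - ∑ j, u j

private lemma dmat_mulVec {k : ℕ} (w : Fin (k + 1 - 1) → ℝ) (i : Fin (k + 1)) :
    (Dmat (k + 1) *ᵥ w) i
      = if h : (i : ℕ) < k then w ⟨(i : ℕ), h⟩ else -∑ j, w j := by
  simp only [Dmat, mulVec, dotProduct, Matrix.of_apply, Nat.add_sub_cancel]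
  by_cases hi : (i : ℕ) < k
  · rw [dif_pos hi]
    refine (Finset.sum_eq_single (⟨(i : ℕ), hi⟩ : Fin (k + 1 - 1)) ?_ ?_).trans ?_
    · intro a _ ha
      rw [if_neg hi.ne, if_neg (fun h => ha (Fin.ext h.symm)), zero_mul]
    · intro h; exact absurd (Finset.mem_univ _) h
    · rw [if_neg hi.ne, if_pos rfl, one_mul]
  · have hik : (i : ℕ) = k := le_antisymm (Nat.lt_succ_iff.mp i.isLt) (le_of_not_gt hi)
    rw [dif_neg hi]
    have hterm : ∀ x : Fin (k + 1 - 1),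
        (if (i : ℕ) = k then (-1 : ℝ) else if (i : ℕ) = (x : ℕ) then 1 else 0) * w x
          = -(w x) := by
      intro x; rw [if_pos hik]; ring
    rw [Finset.sum_congr rfl fun x _ => hterm x, Finset.sum_neg_distrib]

private lemma ones_dot_dmat {k : ℕ} (v : Fin (k + 1 - 1) → ℝ) :
    (fun _ => (1 : ℝ)) ⬝ᵥ (Dmat (k + 1) *ᵥ v) = 0 := by
  simp only [dotProduct, one_mul]
  rw [Fin.sum_univ_castSucc]
  have h1 : ∀ i : Fin k, (Dmat (k + 1) *ᵥ v) i.castSucc = v ⟨(i : ℕ), i.isLt⟩ := by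
    intro i
    rw [dmat_mulVec]
    exact dif_pos i.isLt
  have h2 : (Dmat (k + 1) *ᵥ v) (Fin.last k) = -∑ j, v j := by
    rw [dmat_mulVec]
    exact dif_neg (lt_irrefl k)
  rw [Finset.sum_congr rfl fun i _ => h1 i, h2]
  have h3 : (∑ i : Fin k, v ⟨(i : ℕ), i.isLt⟩) = ∑ j, v j := rfl
  rw [h3]; ring

private lemma sum_split {k : ℕ} (f : Fin (k + 1) → ℝ) :
    ∑ i, f i
      = (∑ j : Fin (k + 1 - 1), f (Fin.castLE (Nat.sub_le (k + 1) 1) j)) + f (Fin.last k) := by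
  rw [Fin.sum_univ_castSucc]
  exact rfl

private lemma mulVec_dot_self {M : ℕ} {n : Type*} [Fintype n] (B : Matrix (Fin M) n ℝ)
    (x : n → ℝ) : (B *ᵥ x) ⬝ᵥ (B *ᵥ x) = x ⬝ᵥ ((Bᵀ * B) *ᵥ x) := by
  rw [← mulVec_mulVec, dotProduct_mulVec x Bᵀ, vecMul_transpose]

private lemma dot_expand {n : Type*} [Fintype n] (a b : n → ℝ) :
    (a - b) ⬝ᵥ (a - b) = a ⬝ᵥ a - a ⬝ᵥ b - b ⬝ᵥ a + b ⬝ᵥ b := by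
  simp only [sub_dotProduct, dotProduct_sub]
  ring

private lemma dot_self_pos {n : Type*} [Fintype n] {v : n → ℝ} (hv : v ≠ 0) : 0 < v ⬝ᵥ v := by
  refine lt_of_le_of_ne (Finset.sum_nonneg fun i _ => mul_self_nonneg _) ?_
  exact fun h => hv (dotProduct_self_eq_zero.mp h.symm)

/-- eqs. (S-decomp-like)/(S-full-like): parameterizing the simplex by its
first `ℓ-1` coordinates, the Gaussian likelihood integrates over the simplex to
`(2π/φ)^{(ℓ-1)/2} det(DᵀX_γᵀX_γD)^{-1/2} exp(−(φ/2)(‖y−X_γμ̂_γ‖² + b_γ)) · ℙ(Ũ ∈ Δ̃^{ℓ-1})`,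
where `Ũ ~ N(Πμ̌_γ, (φDᵀX_γᵀX_γD)⁻¹)`; the probability `ℙ(Ũ ∈ Δ̃^{ℓ-1})` is written as the
integral of the corresponding Gaussian density over `Δ̃^{ℓ-1}`. -/
theorem statement_9 {M ℓ : ℕ} (hℓ : 1 ≤ ℓ) (Xg : Matrix (Fin M) (Fin ℓ) ℝ)
    (hX : IsUnit (Xgᵀ * Xg).det) (y : Fin M → ℝ) (φ : ℝ) (hφ : 0 < φ) :
    let G := Xgᵀ * Xg
    let μhat := G⁻¹ *ᵥ (Xgᵀ *ᵥ y)
    let q := (fun _ => (1 : ℝ)) ⬝ᵥ (G⁻¹ *ᵥ fun _ => (1 : ℝ))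
    let μcheck := μhat + ((1 - (fun _ => (1 : ℝ)) ⬝ᵥ μhat) / q) • (G⁻¹ *ᵥ fun _ => (1 : ℝ))
    let b := (1 - (fun _ => (1 : ℝ)) ⬝ᵥ μhat) ^ 2 / q
    let A := (Dmat ℓ)ᵀ * G * Dmat ℓ
    let m : Fin (ℓ - 1) → ℝ := fun i => μcheck (Fin.castLE (Nat.sub_le ℓ 1) i)
    (∫ u in simplexTilde (ℓ - 1),
        Real.exp (-(φ / 2) *
          ((y - Xg *ᵥ liftSimplex ℓ u) ⬝ᵥ (y - Xg *ᵥ liftSimplex ℓ u)))) =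
      (2 * Real.pi / φ) ^ (((ℓ - 1 : ℕ) : ℝ) / 2) * (Real.sqrt A.det)⁻¹ *
        Real.exp (-(φ / 2) * ((y - Xg *ᵥ μhat) ⬝ᵥ (y - Xg *ᵥ μhat) + b)) *
        ∫ u in simplexTilde (ℓ - 1),
          (φ / (2 * Real.pi)) ^ (((ℓ - 1 : ℕ) : ℝ) / 2) * Real.sqrt A.det *
            Real.exp (-(φ / 2) * ((u - m) ⬝ᵥ (A *ᵥ (u - m)))) := by
  obtain ⟨k, rfl⟩ : ∃ k, ℓ = k + 1 := ⟨ℓ - 1, (Nat.succ_pred_eq_of_pos hℓ).symm⟩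
  intro G μhat q μcheck b A m
  have hGdef : G = Xgᵀ * Xg := rfl
  set ones : Fin (k + 1) → ℝ := fun _ => (1 : ℝ) with hones
  set s : ℝ := ones ⬝ᵥ μhat with hs
  set c : ℝ := (1 - s) / q with hc
  set p : Fin (k + 1) → ℝ := G⁻¹ *ᵥ ones with hp
  have hμcheck : μcheck = μhat + c • p := rfl
  have hq : q = ones ⬝ᵥ p := rfl
  have hb : b = (1 - s) ^ 2 / q := rfl
  -- basic matrix facts
  have hGG : G * G⁻¹ = 1 := mul_nonsing_inv _ hX
  have hGG' : G⁻¹ * G = 1 := nonsing_inv_mul _ hX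
  have hGsymm : Gᵀ = G := by rw [hGdef, transpose_mul, transpose_transpose]
  have hGpd : G.PosDef := by
    rw [posDef_iff_dotProduct_mulVec]
    constructor
    · rw [Matrix.IsHermitian, conjTranspose_eq_transpose_of_trivial, hGsymm]
    · intro x hx
      have hsx : star x = x := funext fun i => star_trivial _
      rw [hsx, hGdef, ← mulVec_dot_self]
      refine dot_self_pos fun h0 => hx ?_
      have hgx : G *ᵥ x = 0 := by
        rw [hGdef, ← mulVec_mulVec, h0, mulVec_zero]
      calc x = (G⁻¹ * G) *ᵥ x := by rw [hGG', one_mulVec]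
        _ = G⁻¹ *ᵥ (G *ᵥ x) := by rw [mulVec_mulVec]
        _ = 0 := by rw [hgx, mulVec_zero]
  have hones_ne : ones ≠ 0 := fun h => by
    have := congrFun h 0
    simp [hones] at this
  have hqpos : 0 < q := by
    have h := hGpd.inv.dotProduct_mulVec_pos hones_ne
    have hsx : star ones = ones := funext fun i => star_trivial _
    rw [hsx] at h
    exact h
  have hq0 : q ≠ 0 := hqpos.ne'
  have hGμhat : G *ᵥ μhat = Xgᵀ *ᵥ y := by
    show G *ᵥ (G⁻¹ *ᵥ (Xgᵀ *ᵥ y)) = Xgᵀ *ᵥ y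
    rw [mulVec_mulVec, hGG, one_mulVec]
  have hGp : G *ᵥ p = ones := by
    rw [hp, mulVec_mulVec, hGG, one_mulVec]
  have hXt : Xgᵀ *ᵥ (y - Xg *ᵥ μhat) = 0 := by
    rw [mulVec_sub, mulVec_mulVec, ← hGdef, hGμhat, sub_self]
  have hXr : Xgᵀ *ᵥ (y - Xg *ᵥ μcheck) = (-c) • ones := by
    rw [hμcheck, mulVec_add, mulVec_smul, ← sub_sub, mulVec_sub, hXt, zero_sub,
      mulVec_smul, mulVec_mulVec, ← hGdef, hGp, neg_smul]
  -- sum of μcheck equals 1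
  have hsum : ones ⬝ᵥ μcheck = 1 := by
    rw [hμcheck, dotProduct_add, dotProduct_smul, ← hs, ← hq, smul_eq_mul, hc]
    field_simp
    ring
  have hμsum : (∑ j, m j) + μcheck (Fin.last k) = 1 := by
    have h0 : ones ⬝ᵥ μcheck = ∑ i, μcheck i := by simp [dotProduct, hones]
    rw [h0, sum_split μcheck] at hsum
    exact hsum
  have hmlast : μcheck (Fin.last k) = 1 - ∑ j, m j := by linarith
  -- the lift decomposition
  have hlift : ∀ u : Fin (k + 1 - 1) → ℝ,
      liftSimplex (k + 1) u = μcheck + Dmat (k + 1) *ᵥ (u - m) := by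
    intro u
    funext i
    simp only [liftSimplex, Nat.add_sub_cancel, Pi.add_apply]
    rw [dmat_mulVec]
    by_cases hi : (i : ℕ) < k
    · rw [dif_pos hi, dif_pos hi]
      have hmi : m ⟨(i : ℕ), hi⟩ = μcheck i := congrArg μcheck (Fin.ext rfl)
      have : (u - m) ⟨(i : ℕ), hi⟩ = u ⟨(i : ℕ), hi⟩ - m ⟨(i : ℕ), hi⟩ := rfl
      rw [this, hmi]
      ring
    · have hik : i = Fin.last k :=
        Fin.ext (le_antisymm (Nat.lt_succ_iff.mp i.isLt) (le_of_not_gt hi))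
      rw [dif_neg hi, dif_neg hi, hik, hmlast]
      have hsub : ∑ j, (u - m) j = ∑ j, u j - ∑ j, m j := by
        simp [Finset.sum_sub_distrib]
      rw [hsub]
      ring
  -- cross terms vanish
  have hcross : ∀ v : Fin (k + 1 - 1) → ℝ,
      (y - Xg *ᵥ μcheck) ⬝ᵥ (Xg *ᵥ (Dmat (k + 1) *ᵥ v)) = 0 := by
    intro v
    rw [dotProduct_mulVec, ← mulVec_transpose, hXr, neg_smul, neg_dotProduct,
      smul_dotProduct, smul_eq_mul, ones_dot_dmat, mul_zero, neg_zero]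
  have hcross2 : ∀ z : Fin (k + 1) → ℝ, (y - Xg *ᵥ μhat) ⬝ᵥ (Xg *ᵥ z) = 0 := by
    intro z
    rw [dotProduct_mulVec, ← mulVec_transpose, hXt, zero_dotProduct]
  -- b decomposition
  have hrr : (y - Xg *ᵥ μcheck) ⬝ᵥ (y - Xg *ᵥ μcheck)
      = (y - Xg *ᵥ μhat) ⬝ᵥ (y - Xg *ᵥ μhat) + b := by
    have hz : y - Xg *ᵥ μcheck = (y - Xg *ᵥ μhat) - Xg *ᵥ (c • p) := by
      rw [hμcheck, mulVec_add, sub_add_eq_sub_sub]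
    have h1 : (Xg *ᵥ (c • p)) ⬝ᵥ (y - Xg *ᵥ μhat) = 0 := by
      rw [dotProduct_comm]; exact hcross2 (c • p)
    have h2 : (Xg *ᵥ (c • p)) ⬝ᵥ (Xg *ᵥ (c • p)) = b := by
      rw [mulVec_dot_self, ← hGdef, mulVec_smul, hGp, smul_dotProduct, dotProduct_smul,
        smul_eq_mul, smul_eq_mul, dotProduct_comm, ← hq, hb, hc]
      field_simp
    rw [hz, dot_expand, hcross2 (c • p), h1, h2]
    ring
  -- the full quadratic identity
  have hquad : ∀ u : Fin (k + 1 - 1) → ℝ,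
      (y - Xg *ᵥ liftSimplex (k + 1) u) ⬝ᵥ (y - Xg *ᵥ liftSimplex (k + 1) u)
        = ((y - Xg *ᵥ μhat) ⬝ᵥ (y - Xg *ᵥ μhat) + b) + (u - m) ⬝ᵥ (A *ᵥ (u - m)) := by
    intro u
    have hsplit : y - Xg *ᵥ liftSimplex (k + 1) u
        = (y - Xg *ᵥ μcheck) - Xg *ᵥ (Dmat (k + 1) *ᵥ (u - m)) := by
      rw [hlift u, mulVec_add, sub_add_eq_sub_sub]
    have hAq : (u - m) ⬝ᵥ (A *ᵥ (u - m))
        = (Dmat (k + 1) *ᵥ (u - m)) ⬝ᵥ (G *ᵥ (Dmat (k + 1) *ᵥ (u - m))) := by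
      show (u - m) ⬝ᵥ (((Dmat (k + 1))ᵀ * G * Dmat (k + 1)) *ᵥ (u - m)) = _
      rw [Matrix.mul_assoc, ← mulVec_mulVec, ← mulVec_mulVec,
        dotProduct_mulVec (u - m) (Dmat (k + 1))ᵀ, vecMul_transpose]
    have hss : (Xg *ᵥ (Dmat (k + 1) *ᵥ (u - m))) ⬝ᵥ (Xg *ᵥ (Dmat (k + 1) *ᵥ (u - m)))
        = (u - m) ⬝ᵥ (A *ᵥ (u - m)) := by
      rw [mulVec_dot_self, ← hGdef, hAq, mulVec_mulVec]
    have h1 : (Xg *ᵥ (Dmat (k + 1) *ᵥ (u - m))) ⬝ᵥ (y - Xg *ᵥ μcheck) = 0 := by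
      rw [dotProduct_comm]; exact hcross (u - m)
    rw [hsplit, dot_expand, hcross (u - m), h1, hss, hrr]
    ring
  -- positive definiteness of A
  have hApd : A.PosDef := by
    rw [posDef_iff_dotProduct_mulVec]
    constructor
    · rw [Matrix.IsHermitian, conjTranspose_eq_transpose_of_trivial]
      show ((Dmat (k + 1))ᵀ * G * Dmat (k + 1))ᵀ = A
      rw [transpose_mul, transpose_mul, transpose_transpose, hGsymm, ← Matrix.mul_assoc]
    · intro x hx
      have hsx : star x = x := funext fun i => star_trivial _
      have hAq : x ⬝ᵥ (A *ᵥ x)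
          = (Dmat (k + 1) *ᵥ x) ⬝ᵥ (G *ᵥ (Dmat (k + 1) *ᵥ x)) := by
        show x ⬝ᵥ (((Dmat (k + 1))ᵀ * G * Dmat (k + 1)) *ᵥ x) = _
        rw [Matrix.mul_assoc, ← mulVec_mulVec, ← mulVec_mulVec,
          dotProduct_mulVec x (Dmat (k + 1))ᵀ, vecMul_transpose]
      have hDx : Dmat (k + 1) *ᵥ x ≠ 0 := by
        intro h0
        obtain ⟨i, hi⟩ := Function.ne_iff.mp hx
        apply hi
        have h3 := congrFun h0 (Fin.castLE (Nat.sub_le (k + 1) 1) i)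
        rw [dmat_mulVec,
          dif_pos (show ((Fin.castLE (Nat.sub_le (k + 1) 1) i : Fin (k + 1)) : ℕ) < k
            from i.isLt)] at h3
        have h4 : x ⟨((Fin.castLE (Nat.sub_le (k + 1) 1) i : Fin (k + 1)) : ℕ), i.isLt⟩
            = x i := congrArg x (Fin.ext rfl)
        rw [h4] at h3
        simpa using h3
      have h := hGpd.dotProduct_mulVec_pos hDx
      have hsx2 : star (Dmat (k + 1) *ᵥ x) = Dmat (k + 1) *ᵥ x := funext fun i => star_trivial _
      rw [hsx2] at h
      rw [hsx, hAq]
      exact h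
  have hAdet : 0 < A.det := hApd.det_pos
  have hsq : 0 < Real.sqrt A.det := Real.sqrt_pos.mpr hAdet
  -- rewrite integrands
  set e : ℝ := ((k + 1 - 1 : ℕ) : ℝ) / 2 with he
  set E : ℝ := Real.exp (-(φ / 2) * ((y - Xg *ᵥ μhat) ⬝ᵥ (y - Xg *ᵥ μhat) + b)) with hE
  have hfun : ∀ u : Fin (k + 1 - 1) → ℝ,
      Real.exp (-(φ / 2) *
        ((y - Xg *ᵥ liftSimplex (k + 1) u) ⬝ᵥ (y - Xg *ᵥ liftSimplex (k + 1) u)))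
      = E * Real.exp (-(φ / 2) * ((u - m) ⬝ᵥ (A *ᵥ (u - m)))) := by
    intro u
    rw [hE, ← Real.exp_add, hquad u]
    ring_nf
  calc (∫ u in simplexTilde (k + 1 - 1),
        Real.exp (-(φ / 2) *
          ((y - Xg *ᵥ liftSimplex (k + 1) u) ⬝ᵥ (y - Xg *ᵥ liftSimplex (k + 1) u))))
      = ∫ u in simplexTilde (k + 1 - 1),
          E * Real.exp (-(φ / 2) * ((u - m) ⬝ᵥ (A *ᵥ (u - m)))) :=
        integral_congr_ae (Filter.Eventually.of_forall fun u => hfun u)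
    _ = E * ∫ u in simplexTilde (k + 1 - 1),
          Real.exp (-(φ / 2) * ((u - m) ⬝ᵥ (A *ᵥ (u - m)))) := integral_const_mul _ _
    _ = (2 * Real.pi / φ) ^ e * (Real.sqrt A.det)⁻¹ * E *
        ((φ / (2 * Real.pi)) ^ e * Real.sqrt A.det *
          ∫ u in simplexTilde (k + 1 - 1),
            Real.exp (-(φ / 2) * ((u - m) ⬝ᵥ (A *ᵥ (u - m))))) := by
        have h1 : (2 * Real.pi / φ : ℝ) ^ e * (φ / (2 * Real.pi)) ^ e = 1 := by
          rw [← Real.mul_rpow (by positivity) (by positivity)]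
          have hprod : (2 * Real.pi / φ) * (φ / (2 * Real.pi)) = 1 := by
            field_simp
          rw [hprod, Real.one_rpow]
        have h2 : (Real.sqrt A.det)⁻¹ * Real.sqrt A.det = 1 := inv_mul_cancel₀ hsq.ne'
        set I : ℝ := ∫ u in simplexTilde (k + 1 - 1),
          Real.exp (-(φ / 2) * ((u - m) ⬝ᵥ (A *ᵥ (u - m)))) with hI
        calc E * I = (((2 * Real.pi / φ : ℝ) ^ e * (φ / (2 * Real.pi)) ^ e) *
              ((Real.sqrt A.det)⁻¹ * Real.sqrt A.det)) * (E * I) := by rw [h1, h2]; ring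
          _ = (2 * Real.pi / φ) ^ e * (Real.sqrt A.det)⁻¹ * E *
              ((φ / (2 * Real.pi)) ^ e * Real.sqrt A.det * I) := by ring
    _ = (2 * Real.pi / φ) ^ e * (Real.sqrt A.det)⁻¹ * E *
        ∫ u in simplexTilde (k + 1 - 1),
          (φ / (2 * Real.pi)) ^ e * Real.sqrt A.det *
            Real.exp (-(φ / 2) * ((u - m) ⬝ᵥ (A *ᵥ (u - m)))) := by
        rw [integral_const_mul]
end
end
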